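/- A transitive piecewise continuous monotone interval map f : [0,1] → [0,1] does not have shadowing. -/

import Mathlib

open Set Filter Topology Function

/-- `f : [0,1] → [0,1]` is a piecewise continuous monotone interval map. -/
def IsPCMMap (f : ℝ → ℝ) : Prop :=
  ∃ (n : ℕ) (z : ℕ → ℝ), 1 ≤ n ∧ z 0 = 0 ∧ z (n + 1) = 1 ∧
    (∀ i j, i < j → j ≤ n + 1 → z i < z j) ∧
    (∀ i ≤ n, ContinuousOn f (Ioo (z i) (z (i + 1))) ∧
      (StrictMonoOn f (Ioo (z i) (z (i + 1))) ∨ StrictAntiOn f (Ioo (z i) (z (i + 1))))) ∧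
    (∀ j, 1 ≤ j → j ≤ n → ∃ L R : ℝ,
      Tendsto f (nhdsWithin (z j) (Iio (z j))) (nhds L) ∧
      Tendsto f (nhdsWithin (z j) (Ioi (z j))) (nhds R) ∧ L ≠ R)

/-- `f` is transitive on `[0,1]`. -/
def IntervalTransitive (f : ℝ → ℝ) : Prop :=
  ∀ a b : ℝ, a < b → Ioo a b ⊆ Icc 0 1 →
    ∃ m : ℕ, Ioo (0:ℝ) 1 ⊆ ⋃ k ≤ m, f^[k] '' Ioo a b

/-- `f` has shadowing on `K` (infinite pseudo-orbits). -/
def ShadowingOn (f : ℝ → ℝ) (K : Set ℝ) : Prop :=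
  ∀ ε > (0:ℝ), ∃ δ > (0:ℝ), ∀ x : ℕ → ℝ, (∀ i, x i ∈ K) →
    (∀ i, |f (x i) - x (i + 1)| < δ) →
    ∃ z ∈ K, ∀ i, |f^[i] z - x i| < ε

namespace NoShadow

structure PC where
  f : ℝ → ℝ
  n : ℕ
  z : ℕ → ℝ
  hn : 1 ≤ n
  hz0 : z 0 = 0
  hzn : z (n + 1) = 1
  hzlt : ∀ i j, i < j → j ≤ n + 1 → z i < z j
  hcont : ∀ i ≤ n, ContinuousOn f (Ioo (z i) (z (i + 1)))
  hpm : ∀ i ≤ n, StrictMonoOn f (Ioo (z i) (z (i + 1))) ∨ StrictAntiOn f (Ioo (z i) (z (i + 1)))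
  hf : MapsTo f (Icc 0 1) (Icc 0 1)
  htr : IntervalTransitive f
  L : ℕ → ℝ
  R : ℕ → ℝ
  hL : ∀ j, 1 ≤ j → j ≤ n → Tendsto f (𝓝[<] (z j)) (𝓝 (L j))
  hR : ∀ j, 1 ≤ j → j ≤ n → Tendsto f (𝓝[>] (z j)) (𝓝 (R j))
  hLR : ∀ j, 1 ≤ j → j ≤ n → L j ≠ R j
  M0 : ℝ
  M1 : ℝ
  hM0 : Tendsto f (𝓝[>] (0:ℝ)) (𝓝 M0)
  hM1 : Tendsto f (𝓝[<] (1:ℝ)) (𝓝 M1)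
  ε : ℝ
  δ : ℝ
  hε : 0 < ε
  hδ0 : 0 < δ
  hδε : δ ≤ ε
  hd : ∀ j, 1 ≤ j → j ≤ n → 8 * ε < |L j - R j|
  hgap : ∀ t, t ≤ n → 2 * ε < z (t+1) - z t
  hcolL : ∀ j, 1 ≤ j → j ≤ n → ∀ y, z j - 2*ε < y → y < z j → |f y - L j| < |L j - R j| / 8
  hcolR : ∀ j, 1 ≤ j → j ≤ n → ∀ y, z j < y → y < z j + 2*ε → |f y - R j| < |L j - R j| / 8
  hq1 : f 1 ≠ M1 → (8*ε < |f 1 - M1| ∧ ∀ y, 1 - 2*ε < y → y < 1 → |f y - M1| < |f 1 - M1| / 4)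
  hq0 : f 0 ≠ M0 → (8*ε < |f 0 - M0| ∧ ∀ y, 0 < y → y < 2*ε → |f y - M0| < |f 0 - M0| / 4)
  hsh : ∀ x : ℕ → ℝ, (∀ i, x i ∈ Icc 0 1) → (∀ i, |f (x i) - x (i + 1)| < δ) →
    ∃ w ∈ Icc (0:ℝ) 1, ∀ i, |f^[i] w - x i| < ε

variable (P : PC)

/-! ### Basic facts -/

lemma PC.z_mono : ∀ i j, i ≤ j → j ≤ P.n + 1 → P.z i ≤ P.z j := by
  intro i j hij hj
  rcases eq_or_lt_of_le hij with h | h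
  · exact le_of_eq (by rw [h])
  · exact (P.hzlt i j h hj).le

lemma PC.c_pos : 0 < P.z 1 := by
  have := P.hzlt 0 1 (by norm_num) (by have := P.hn; omega)
  rw [P.hz0] at this; exact this

lemma PC.c_lt_one : P.z 1 < 1 := by
  have := P.hzlt 1 (P.n + 1) (by have := P.hn; omega) le_rfl
  rw [P.hzn] at this; exact this

lemma PC.z_mem_Icc {j : ℕ} (hj : j ≤ P.n + 1) : P.z j ∈ Icc (0:ℝ) 1 := by
  constructor
  · have := P.z_mono 0 j (by have := P.hn; omega) hj; rw [P.hz0] at this; exact this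
  · have := P.z_mono j (P.n + 1) hj le_rfl; rw [P.hzn] at this; exact this

lemma PC.iter_mem {x : ℝ} (hx : x ∈ Icc (0:ℝ) 1) (k : ℕ) : P.f^[k] x ∈ Icc (0:ℝ) 1 :=
  P.hf.iterate k hx

lemma PC.gap01 : 2 * P.ε < P.z 1 := by
  have := P.hgap 0 (by have := P.hn; omega); rw [P.hz0] at this; linarith

lemma PC.gap1n : 2 * P.ε < 1 - P.z 1 := by
  have h := P.hgap P.n le_rfl
  rw [P.hzn] at h
  have h2 := P.z_mono 1 P.n P.hn (by have := P.hn; omega)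
  linarith

lemma PC.zn_lt : P.z P.n < 1 := by
  have := P.hzlt P.n (P.n+1) (by have := P.hn; omega) le_rfl; rw [P.hzn] at this; exact this

lemma PC.one_sub_eps_gt : P.z P.n < 1 - 2 * P.ε := by
  have := P.hgap P.n le_rfl; rw [P.hzn] at this; linarith

/-- every point of `(0,1)` is hit exactly from every interval: special case, the
discontinuity point `z 1`. -/
lemma PC.hit_c {a b : ℝ} (hab : a < b) (hsub : Ioo a b ⊆ Icc 0 1) :
    ∃ u k, u ∈ Ioo a b ∧ P.f^[k] u = P.z 1 := by
  obtain ⟨m, hm⟩ := P.htr a b hab hsub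
  have hc : P.z 1 ∈ Ioo (0:ℝ) 1 := ⟨P.c_pos, P.c_lt_one⟩
  have := hm hc
  simp only [mem_iUnion, mem_image] at this
  obtain ⟨k, _, u, hu, hk⟩ := this
  exact ⟨u, k, hu, hk⟩

/-- The general trap lemma: if a family of nonempty open intervals, none of which
contains `z 1`, is mapped forward into each other by `f`, starting from a valid
sub-interval of `[0,1]`, we get a contradiction with transitivity. -/
lemma PC.trap (A B : ℕ → ℝ) (h0 : A 0 < B 0) (hsub : Ioo (A 0) (B 0) ⊆ Icc 0 1)
    (hc : ∀ i, P.z 1 ∉ Ioo (A i) (B i))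
    (hstep : ∀ i u, u ∈ Ioo (A i) (B i) → P.f u ∈ Ioo (A (i+1)) (B (i+1))) : False := by
  obtain ⟨u, k, hu, hk⟩ := P.hit_c h0 hsub
  have key : ∀ i, P.f^[i] u ∈ Ioo (A i) (B i) := by
    intro i
    induction i with
    | zero => simpa using hu
    | succ i ih =>
      rw [Function.iterate_succ_apply']
      exact hstep i _ ih
  exact hc k (hk ▸ key k)


/-! ### Partition lemmas -/

def PC.isZ (x : ℝ) : Prop := ∃ j, j ≤ P.n + 1 ∧ P.z j = x

lemma PC.zlt_conv {i j : ℕ} (hi : i ≤ P.n + 1) (hj : j ≤ P.n + 1)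
    (h : P.z i < P.z j) : i < j := by
  by_contra hc
  push_neg at hc
  exact absurd (P.z_mono j i hc hi) (not_le.mpr h)

lemma PC.cover {x : ℝ} (hx : x ∈ Icc (0:ℝ) 1) (hnz : ¬ P.isZ x) :
    ∃ t, t ≤ P.n ∧ x ∈ Ioo (P.z t) (P.z (t+1)) := by
  classical
  have hQ0 : P.z 0 < x := by
    rcases lt_or_eq_of_le hx.1 with h | h
    · rw [P.hz0]; exact h
    · exact absurd ⟨0, by omega, by rw [P.hz0]; exact h⟩ hnz
  obtain ⟨t0, ht0le, hspec, hmax⟩ :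
      ∃ t0, t0 ≤ P.n + 1 ∧ P.z t0 < x ∧ ∀ k, t0 < k → k ≤ P.n + 1 → ¬ P.z k < x := by
    refine ⟨Nat.findGreatest (fun t => P.z t < x) (P.n + 1), Nat.findGreatest_le _,
      Nat.findGreatest_spec (P := fun t => P.z t < x) (Nat.zero_le _) hQ0, ?_⟩
    intro k hk1 hk2
    exact Nat.findGreatest_is_greatest (P := fun t => P.z t < x) hk1 hk2
  have ht0n : t0 ≤ P.n := by
    by_contra h
    have he : t0 = P.n + 1 := by omega
    rw [he, P.hzn] at hspec
    exact absurd hx.2 (not_le.mpr hspec)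
  have hnext : ¬ P.z (t0+1) < x := hmax (t0+1) (by omega) (by omega)
  push_neg at hnext
  refine ⟨t0, ht0n, hspec, ?_⟩
  rcases lt_or_eq_of_le hnext with h | h
  · exact h
  · exact absurd ⟨t0 + 1, by omega, h.symm⟩ hnz

/-- helper: strict monotone or antitone map preserves strict betweenness. -/
lemma betw {g : ℝ → ℝ} {s : Set ℝ}
    (hm : StrictMonoOn g s ∨ StrictAntiOn g s) {a b u : ℝ}
    (ha : a ∈ s) (hb : b ∈ s) (hu : u ∈ s)
    (h1 : min a b < u) (h2 : u < max a b) :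
    min (g a) (g b) < g u ∧ g u < max (g a) (g b) := by
  rcases lt_trichotomy a b with hab | hab | hab
  · have e1 : min a b = a := min_eq_left hab.le
    have e2 : max a b = b := max_eq_right hab.le
    rw [e1] at h1; rw [e2] at h2
    rcases hm with hm | hm
    · exact ⟨lt_of_le_of_lt (min_le_left _ _) (hm ha hu h1),
        lt_of_lt_of_le (hm hu hb h2) (le_max_right _ _)⟩
    · exact ⟨lt_of_le_of_lt (min_le_right _ _) (hm hu hb h2),
        lt_of_lt_of_le (hm ha hu h1) (le_max_left _ _)⟩
  · subst hab
    simp only [min_self, max_self] at h1 h2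
    exact absurd (h1.trans h2) (lt_irrefl _)
  · have e1 : min a b = b := min_eq_right hab.le
    have e2 : max a b = a := max_eq_left hab.le
    rw [e1] at h1; rw [e2] at h2
    rcases hm with hm | hm
    · exact ⟨lt_of_le_of_lt (min_le_right _ _) (hm hb hu h1),
        lt_of_lt_of_le (hm hu ha h2) (le_max_left _ _)⟩
    · exact ⟨lt_of_le_of_lt (min_le_left _ _) (hm hu ha h2),
        lt_of_lt_of_le (hm hb hu h1) (le_max_right _ _)⟩

/-! ### Lemma A : expansivity of clean pairs -/

lemma PC.no_z_between {a b : ℝ} {j : ℕ} (hj1 : 1 ≤ j) (hjn : j ≤ P.n)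
    (h1 : a < P.z j) (h2 : P.z j < b) (hclose : |a - b| < 2 * P.ε)
    (hnext : |P.f a - P.f b| < 2 * P.ε) : False := by
  have hd := P.hd j hj1 hjn
  have haz : P.z j - 2 * P.ε < a := by
    have : b - a < 2 * P.ε := by
      have := abs_lt.mp hclose; linarith [this.1]
    linarith
  have hbz : b < P.z j + 2 * P.ε := by
    have : b - a < 2 * P.ε := by
      have := abs_lt.mp hclose; linarith [this.1]
    linarith
  have hfa := P.hcolL j hj1 hjn a haz h1
  have hfb := P.hcolR j hj1 hjn b h2 hbz
  have htri : |P.L j - P.R j| ≤ |P.f a - P.L j| + |P.f a - P.f b| + |P.f b - P.R j| := by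
    have t1 : |P.L j - P.R j| ≤ |P.L j - P.f b| + |P.f b - P.R j| := abs_sub_le _ _ _
    have t2 : |P.L j - P.f b| ≤ |P.L j - P.f a| + |P.f a - P.f b| := abs_sub_le _ _ _
    rw [abs_sub_comm (P.L j) (P.f a)] at t2
    linarith
  linarith

lemma PC.same_piece {a b : ℝ} (ha : a ∈ Icc (0:ℝ) 1) (hb : b ∈ Icc (0:ℝ) 1)
    (hna : ¬ P.isZ a) (hnb : ¬ P.isZ b) (hclose : |a - b| < 2 * P.ε)
    (hnext : |P.f a - P.f b| < 2 * P.ε) :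
    ∃ t, t ≤ P.n ∧ a ∈ Ioo (P.z t) (P.z (t+1)) ∧ b ∈ Ioo (P.z t) (P.z (t+1)) := by
  obtain ⟨t, htn, hat⟩ := P.cover ha hna
  obtain ⟨t', htn', hbt⟩ := P.cover hb hnb
  rcases lt_trichotomy t t' with htt | htt | htt
  · exfalso
    -- a < z (t+1) ≤ z t' < b, use j := t'
    have h1 : a < P.z t' := lt_of_lt_of_le hat.2 (P.z_mono (t+1) t' htt (by omega))
    have hj1 : 1 ≤ t' := by omega
    exact P.no_z_between hj1 htn' h1 hbt.1 hclose hnext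
  · exact ⟨t, htn, hat, htt ▸ hbt⟩
  · exfalso
    have h1 : b < P.z t := lt_of_lt_of_le hbt.2 (P.z_mono (t'+1) t htt (by omega))
    have hj1 : 1 ≤ t := by omega
    have hclose' : |b - a| < 2 * P.ε := by rw [abs_sub_comm]; exact hclose
    have hnext' : |P.f b - P.f a| < 2 * P.ε := by rw [abs_sub_comm]; exact hnext
    exact P.no_z_between hj1 htn h1 hat.1 hclose' hnext'

lemma PC.lemA {α β : ℝ} (hα : α ∈ Icc (0:ℝ) 1) (hβ : β ∈ Icc (0:ℝ) 1) (hne : α ≠ β)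
    (hfa : ∀ k, ¬ P.isZ (P.f^[k] α)) (hfb : ∀ k, ¬ P.isZ (P.f^[k] β))
    (htrack : ∀ k, |P.f^[k] α - P.f^[k] β| < 2 * P.ε) : False := by
  have hαk : ∀ k, P.f^[k] α ∈ Icc (0:ℝ) 1 := fun k => P.iter_mem hα k
  have hβk : ∀ k, P.f^[k] β ∈ Icc (0:ℝ) 1 := fun k => P.iter_mem hβ k
  have hnek : ∀ k, P.f^[k] α ≠ P.f^[k] β := by
    intro k
    induction k with
    | zero => simpa using hne
    | succ k ih =>
      obtain ⟨t, htn, hat, hbt⟩ := P.same_piece (hαk k) (hβk k) (hfa k) (hfb k) (htrack k)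
        (by have e1 : P.f^[k+1] α = P.f (P.f^[k] α) := Function.iterate_succ_apply' P.f k α
            have e2 : P.f^[k+1] β = P.f (P.f^[k] β) := Function.iterate_succ_apply' P.f k β
            rw [← e1, ← e2]
            exact htrack (k+1))
      have e1 : P.f^[k+1] α = P.f (P.f^[k] α) := Function.iterate_succ_apply' P.f k α
      have e2 : P.f^[k+1] β = P.f (P.f^[k] β) := Function.iterate_succ_apply' P.f k β
      rw [e1, e2]
      rcases P.hpm t htn with hm | hm
      · exact fun h => ih (hm.injOn hat hbt h)
      · exact fun h => ih (hm.injOn hat hbt h)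
  -- the same piece for each k
  have hsp : ∀ k, ∃ t, t ≤ P.n ∧ P.f^[k] α ∈ Ioo (P.z t) (P.z (t+1)) ∧
      P.f^[k] β ∈ Ioo (P.z t) (P.z (t+1)) := by
    intro k
    exact P.same_piece (hαk k) (hβk k) (hfa k) (hfb k) (htrack k)
      (by have e1 : P.f^[k+1] α = P.f (P.f^[k] α) := Function.iterate_succ_apply' P.f k α
          have e2 : P.f^[k+1] β = P.f (P.f^[k] β) := Function.iterate_succ_apply' P.f k β
          rw [← e1, ← e2]
          exact htrack (k+1))
  -- apply the trap
  refine P.trap (fun k => min (P.f^[k] α) (P.f^[k] β)) (fun k => max (P.f^[k] α) (P.f^[k] β))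
    ?_ ?_ ?_ ?_
  · simp only [Function.iterate_zero_apply]
    exact min_lt_max.mpr hne
  · intro u hu
    simp only [Function.iterate_zero_apply] at hu
    constructor
    · exact le_trans (le_min hα.1 hβ.1) hu.1.le
    · exact le_trans hu.2.le (max_le hα.2 hβ.2)
  · intro k hck
    obtain ⟨t, htn, hat, hbt⟩ := hsp k
    have hz1 : P.z 1 ∈ Ioo (P.z t) (P.z (t+1)) := by
      constructor
      · exact lt_of_le_of_lt (le_min hat.1.le hbt.1.le) hck.1
      · exact lt_of_lt_of_le hck.2 (max_le hat.2.le hbt.2.le)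
    have h1 : t < 1 := P.zlt_conv (by omega) (by have := P.hn; omega) hz1.1
    have h2 : (1:ℕ) < t + 1 := P.zlt_conv (by have := P.hn; omega) (by omega) hz1.2
    omega
  · intro k u hu
    obtain ⟨t, htn, hat, hbt⟩ := hsp k
    have hus : u ∈ Ioo (P.z t) (P.z (t+1)) := by
      constructor
      · exact lt_of_le_of_lt (le_min hat.1.le hbt.1.le) hu.1
      · exact lt_of_lt_of_le hu.2 (max_le hat.2.le hbt.2.le)
    have hb := betw (P.hpm t htn) hat hbt hus hu.1 hu.2
    show P.f u ∈ Ioo (min (P.f^[k + 1] α) (P.f^[k + 1] β)) (max (P.f^[k + 1] α) (P.f^[k + 1] β))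
    have e1 : P.f^[k+1] α = P.f (P.f^[k] α) := Function.iterate_succ_apply' P.f k α
    have e2 : P.f^[k+1] β = P.f (P.f^[k] β) := Function.iterate_succ_apply' P.f k β
    rw [e1, e2]
    exact hb


/-! ### The countable bad set -/

def PC.Bad : Set ℝ := {x | x ∈ Icc (0:ℝ) 1 ∧ ∃ k, P.isZ (P.f^[k] x)}

lemma PC.zset_finite : {x : ℝ | P.isZ x}.Finite := by
  have : {x : ℝ | P.isZ x} ⊆ P.z '' (Set.Iic (P.n + 1)) := by
    intro x ⟨j, hj, hx⟩
    exact ⟨j, hj, hx⟩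
  exact Set.Finite.subset ((Set.finite_Iic _).image P.z) this

lemma PC.finite_pre {S : Set ℝ} (hS : S.Finite) :
    {x | x ∈ Icc (0:ℝ) 1 ∧ P.f x ∈ S}.Finite := by
  have hsub : {x | x ∈ Icc (0:ℝ) 1 ∧ P.f x ∈ S} ⊆
      {x : ℝ | P.isZ x} ∪ ⋃ t ∈ Set.Iic P.n, (Ioo (P.z t) (P.z (t+1)) ∩ P.f ⁻¹' S) := by
    intro x ⟨hx1, hx2⟩
    by_cases hz : P.isZ x
    · exact Or.inl hz
    · obtain ⟨t, htn, hxt⟩ := P.cover hx1 hz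
      exact Or.inr (Set.mem_biUnion htn ⟨hxt, hx2⟩)
  refine Set.Finite.subset (Set.Finite.union P.zset_finite ?_) hsub
  refine Set.Finite.biUnion (Set.finite_Iic _) ?_
  intro t ht
  have hinj : InjOn P.f (Ioo (P.z t) (P.z (t+1)) ∩ P.f ⁻¹' S) := by
    rcases P.hpm t ht with hm | hm
    · exact (hm.injOn).mono Set.inter_subset_left
    · exact (hm.injOn).mono Set.inter_subset_left
  refine Set.Finite.of_finite_image (Set.Finite.subset hS ?_) hinj
  intro y ⟨x, hx, hxy⟩
  rw [← hxy]; exact hx.2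

lemma PC.bad_countable : P.Bad.Countable := by
  have hSk : ∀ k, {x | x ∈ Icc (0:ℝ) 1 ∧ P.isZ (P.f^[k] x)}.Finite := by
    intro k
    induction k with
    | zero =>
      refine Set.Finite.subset P.zset_finite ?_
      intro x ⟨_, hx⟩
      simpa using hx
    | succ k ih =>
      have : {x | x ∈ Icc (0:ℝ) 1 ∧ P.isZ (P.f^[k+1] x)} ⊆
          {x | x ∈ Icc (0:ℝ) 1 ∧ P.f x ∈ {y | y ∈ Icc (0:ℝ) 1 ∧ P.isZ (P.f^[k] y)}} := by
        intro x ⟨hx1, hx2⟩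
        refine ⟨hx1, P.hf hx1, ?_⟩
        rwa [Function.iterate_succ_apply] at hx2
      exact Set.Finite.subset (P.finite_pre ih) this
  have : P.Bad ⊆ ⋃ k : ℕ, {x | x ∈ Icc (0:ℝ) 1 ∧ P.isZ (P.f^[k] x)} := by
    intro x ⟨hx1, k, hk⟩
    exact Set.mem_iUnion.mpr ⟨k, hx1, hk⟩
  exact Set.Countable.mono this (countable_iUnion fun k => (hSk k).countable)

lemma PC.not_bad_free {x : ℝ} (hx : x ∈ Icc (0:ℝ) 1) (hb : x ∉ P.Bad) :
    ∀ k, ¬ P.isZ (P.f^[k] x) := by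
  intro k hk
  exact hb ⟨hx, k, hk⟩

/-! ### The endgame -/

lemma PC.uncountable_Ioo_diff_bad {a b : ℝ} (hab : a < b) :
    ¬ (Ioo a b \ P.Bad).Countable := by
  intro h
  have h2 : (Ioo a b).Countable := by
    refine Set.Countable.mono ?_ (h.union P.bad_countable)
    intro x hx
    by_cases hb : x ∈ P.Bad
    · exact Or.inr hb
    · exact Or.inl ⟨hx, hb⟩
  have h3 := h2.le_aleph0
  rw [Cardinal.mk_Ioo_real hab] at h3
  exact absurd h3 Cardinal.aleph0_lt_continuum.not_ge

def PC.extO (xs : ℕ → ℝ) (s : ℕ) (w : ℝ) : ℕ → ℝ := fun i => if i < s then xs i else P.f^[i-s] w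

lemma PC.extO_lt {xs s w} {i : ℕ} (hi : i < s) : P.extO xs s w i = xs i := by
  simp [PC.extO, if_pos hi]

lemma PC.extO_ge {xs s w} {i : ℕ} (hi : s ≤ i) : P.extO xs s w i = P.f^[i-s] w := by
  simp [PC.extO, if_neg (by omega : ¬ i < s)]

lemma PC.extO_s {xs s w} : P.extO xs s w s = w := by
  rw [P.extO_ge le_rfl]
  simp

lemma PC.iter_pred {s : ℕ} (hs : 1 ≤ s) (x : ℝ) : P.f^[s] x = P.f (P.f^[s-1] x) := by
  conv_lhs => rw [show s = (s-1) + 1 by omega]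
  rw [Function.iterate_succ_apply']

lemma PC.ext_valid (s : ℕ) (hs : 1 ≤ s) (xs : ℕ → ℝ)
    (hxsI : ∀ i, i < s → xs i ∈ Icc (0:ℝ) 1)
    (hxsV : ∀ i, i + 1 < s → |P.f (xs i) - xs (i+1)| < P.δ)
    {w : ℝ} (hw : w ∈ Icc (0:ℝ) 1) (hjump : |P.f (xs (s-1)) - w| < P.δ) :
    (∀ i, P.extO xs s w i ∈ Icc (0:ℝ) 1) ∧
    (∀ i, |P.f (P.extO xs s w i) - P.extO xs s w (i+1)| < P.δ) := by
  constructor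
  · intro i
    by_cases hi : i < s
    · rw [P.extO_lt hi]; exact hxsI i hi
    · rw [P.extO_ge (by omega)]; exact P.iter_mem hw _
  · intro i
    rcases Nat.lt_trichotomy (i+1) s with h | h | h
    · rw [P.extO_lt (by omega), P.extO_lt h]
      exact hxsV i h
    · have hi : i < s := by omega
      have he : i = s - 1 := by omega
      rw [P.extO_lt hi, P.extO_ge (by omega), show i + 1 - s = 0 by omega]
      simp only [Function.iterate_zero_apply]
      rw [he]
      exact hjump
    · rw [P.extO_ge (by omega : s ≤ i), P.extO_ge (by omega : s ≤ i+1),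
        show i + 1 - s = (i - s) + 1 by omega, Function.iterate_succ_apply']
      simpa using P.hδ0

lemma PC.ext_track {s : ℕ} {xs : ℕ → ℝ} {w zz : ℝ}
    (htr : ∀ i, |P.f^[i] zz - P.extO xs s w i| < P.ε) :
    ∀ i, |P.f^[i] (P.f^[s] zz) - P.f^[i] w| < P.ε := by
  intro i
  have e1 : P.f^[i] (P.f^[s] zz) = P.f^[i + s] zz := (Function.iterate_add_apply P.f i s zz).symm
  have e2 : P.extO xs s w (i + s) = P.f^[i] w := by
    rw [P.extO_ge (by omega)]
    congr 1
    omega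
  rw [e1, ← e2]
  exact htr (i + s)

lemma PC.endgame (s : ℕ) (hs : 1 ≤ s) (xs : ℕ → ℝ)
    (hxsI : ∀ i, i < s → xs i ∈ Icc (0:ℝ) 1)
    (hxsV : ∀ i, i + 1 < s → |P.f (xs i) - xs (i+1)| < P.δ)
    (a b : ℝ) (hab : a < b) (hsubI : Ioo a b ⊆ Icc (0:ℝ) 1)
    (hW1 : ∀ w ∈ Ioo a b, |P.f (xs (s-1)) - w| < P.δ)
    (hW2 : ∀ w ∈ Ioo a b, ∀ zz, zz ∈ Icc (0:ℝ) 1 →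
        (∀ i, |P.f^[i] zz - P.extO xs s w i| < P.ε) →
        P.f^[s] zz ≠ w) : False := by
  have key : ∀ w, ∃ y, w ∈ Ioo a b → (y ∈ Icc (0:ℝ) 1 ∧ y ≠ w ∧
      ∀ i, |P.f^[i] y - P.f^[i] w| < P.ε) := by
    intro w
    by_cases hw : w ∈ Ioo a b
    · have hwI : w ∈ Icc (0:ℝ) 1 := hsubI hw
      obtain ⟨hXI, hXV⟩ := P.ext_valid s hs xs hxsI hxsV hwI (hW1 w hw)
      obtain ⟨zz, hzzI, hzz⟩ := P.hsh _ hXI hXV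
      exact ⟨P.f^[s] zz, fun _ => ⟨P.iter_mem hzzI _, hW2 w hw zz hzzI hzz, P.ext_track hzz⟩⟩
    · exact ⟨0, fun h => absurd h hw⟩
  choose Y hY using key
  by_cases hcase : ∃ w ∈ Ioo a b \ P.Bad, Y w ∉ P.Bad
  · obtain ⟨w, ⟨hw, hwb⟩, hyb⟩ := hcase
    obtain ⟨hyI, hyne, hytrack⟩ := hY w hw
    exact P.lemA hyI (hsubI hw) hyne (P.not_bad_free hyI hyb)
      (P.not_bad_free (hsubI hw) hwb)
      (fun k => lt_of_lt_of_le (hytrack k) (by linarith [P.hε]))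
  · push_neg at hcase
    have hmaps : Set.MapsTo Y (Ioo a b \ P.Bad) P.Bad := fun w hw => hcase w hw
    have hninj : ¬ InjOn Y (Ioo a b \ P.Bad) := by
      intro hinj
      exact P.uncountable_Ioo_diff_bad hab (hmaps.countable_of_injOn hinj P.bad_countable)
    rw [Set.InjOn] at hninj
    push_neg at hninj
    obtain ⟨w, hw, w', hw', heq, hne⟩ := hninj
    obtain ⟨hI, hne1, htr1⟩ := hY w hw.1
    obtain ⟨hI', hne2, htr2⟩ := hY w' hw'.1
    refine P.lemA (hsubI hw.1) (hsubI hw'.1) hne (P.not_bad_free (hsubI hw.1) hw.2)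
      (P.not_bad_free (hsubI hw'.1) hw'.2) ?_
    intro k
    have t1 := htr1 k
    have t2 := htr2 k
    rw [heq] at t1
    calc |P.f^[k] w - P.f^[k] w'| ≤ |P.f^[k] w - P.f^[k] (Y w')| + |P.f^[k] (Y w') - P.f^[k] w'| :=
          abs_sub_le _ _ _
      _ < 2 * P.ε := by rw [abs_sub_comm] at t1; linarith

/-! ### One-sided limit helpers -/

lemma strict_below_right {g : ℝ → ℝ} {a b M : ℝ}
    (hm : StrictMonoOn g (Ioo a b)) (hM : Tendsto g (𝓝[<] b) (𝓝 M))
    {u : ℝ} (hu : u ∈ Ioo a b) : g u < M := by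
  obtain ⟨u', hu1, hu2⟩ := exists_between hu.2
  have hu'm : u' ∈ Ioo a b := ⟨hu.1.trans hu1, hu2⟩
  have h1 : g u < g u' := hm hu hu'm hu1
  have h2 : g u' ≤ M := by
    refine ge_of_tendsto hM ?_
    filter_upwards [Ioo_mem_nhdsLT_of_mem (show b ∈ Ioc u' b from ⟨hu2, le_rfl⟩)] with y hy
    exact (hm hu'm ⟨hu'm.1.trans hy.1, hy.2⟩ hy.1).le
  linarith

lemma strict_above_right {g : ℝ → ℝ} {a b M : ℝ}
    (hm : StrictAntiOn g (Ioo a b)) (hM : Tendsto g (𝓝[<] b) (𝓝 M))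
    {u : ℝ} (hu : u ∈ Ioo a b) : M < g u := by
  obtain ⟨u', hu1, hu2⟩ := exists_between hu.2
  have hu'm : u' ∈ Ioo a b := ⟨hu.1.trans hu1, hu2⟩
  have h1 : g u' < g u := hm hu hu'm hu1
  have h2 : M ≤ g u' := by
    refine le_of_tendsto hM ?_
    filter_upwards [Ioo_mem_nhdsLT_of_mem (show b ∈ Ioc u' b from ⟨hu2, le_rfl⟩)] with y hy
    exact (hm hu'm ⟨hu'm.1.trans hy.1, hy.2⟩ hy.1).le
  linarith

lemma strict_above_left {g : ℝ → ℝ} {a b M : ℝ}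
    (hm : StrictMonoOn g (Ioo a b)) (hM : Tendsto g (𝓝[>] a) (𝓝 M))
    {u : ℝ} (hu : u ∈ Ioo a b) : M < g u := by
  obtain ⟨u', hu1, hu2⟩ := exists_between hu.1
  have hu'm : u' ∈ Ioo a b := ⟨hu1, hu2.trans hu.2⟩
  have h1 : g u' < g u := hm hu'm hu hu2
  have h2 : M ≤ g u' := by
    refine le_of_tendsto hM ?_
    filter_upwards [Ioo_mem_nhdsGT_of_mem (show a ∈ Ico a u' from ⟨le_rfl, hu1⟩)] with y hy
    exact (hm ⟨hy.1, hy.2.trans hu'm.2⟩ hu'm hy.2).le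
  linarith

lemma strict_below_left {g : ℝ → ℝ} {a b M : ℝ}
    (hm : StrictAntiOn g (Ioo a b)) (hM : Tendsto g (𝓝[>] a) (𝓝 M))
    {u : ℝ} (hu : u ∈ Ioo a b) : g u < M := by
  obtain ⟨u', hu1, hu2⟩ := exists_between hu.1
  have hu'm : u' ∈ Ioo a b := ⟨hu1, hu2.trans hu.2⟩
  have h1 : g u < g u' := hm hu'm hu hu2
  have h2 : g u' ≤ M := by
    refine ge_of_tendsto hM ?_
    filter_upwards [Ioo_mem_nhdsGT_of_mem (show a ∈ Ico a u' from ⟨le_rfl, hu1⟩)] with y hy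
    exact (hm ⟨hy.1, hy.2.trans hu'm.2⟩ hu'm hy.2).le
  linarith

/-- a point with `g`-value close to the one-sided limit, to the left of `b`,
within distance `w0` of `b`. -/
lemma point_near_left {g : ℝ → ℝ} {b M : ℝ} (hM : Tendsto g (𝓝[<] b) (𝓝 M))
    {acc w0 : ℝ} (hacc : 0 < acc) (hw0 : 0 < w0) :
    ∃ p, b - w0 < p ∧ p < b ∧ |g p - M| < acc := by
  have h1 : ∀ᶠ y in 𝓝[<] b, |g y - M| < acc := by
    have := Metric.tendsto_nhds.mp hM acc hacc
    simpa [Real.dist_eq] using this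
  have h2 : ∀ᶠ y in 𝓝[<] b, b - w0 < y ∧ y < b := by
    filter_upwards [Ioo_mem_nhdsLT_of_mem (show b ∈ Ioc (b - w0) b from ⟨by linarith, le_rfl⟩)]
      with y hy
    exact ⟨hy.1, hy.2⟩
  obtain ⟨p, hp1, hp2⟩ := (h1.and h2).exists
  exact ⟨p, hp2.1, hp2.2, hp1⟩

lemma point_near_right {g : ℝ → ℝ} {b M : ℝ} (hM : Tendsto g (𝓝[>] b) (𝓝 M))
    {acc w0 : ℝ} (hacc : 0 < acc) (hw0 : 0 < w0) :
    ∃ p, b < p ∧ p < b + w0 ∧ |g p - M| < acc := by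
  have h1 : ∀ᶠ y in 𝓝[>] b, |g y - M| < acc := by
    have := Metric.tendsto_nhds.mp hM acc hacc
    simpa [Real.dist_eq] using this
  have h2 : ∀ᶠ y in 𝓝[>] b, b < y ∧ y < b + w0 := by
    filter_upwards [Ioo_mem_nhdsGT_of_mem (show b ∈ Ico b (b + w0) from ⟨le_rfl, by linarith⟩)]
      with y hy
    exact ⟨hy.1, hy.2⟩
  obtain ⟨p, hp1, hp2⟩ := (h1.and h2).exists
  exact ⟨p, hp2.1, hp2.2, hp1⟩

/-- collar extraction from a one-sided limit (left version). -/
lemma collar_left {g : ℝ → ℝ} {b M : ℝ} (hM : Tendsto g (𝓝[<] b) (𝓝 M))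
    {acc : ℝ} (hacc : 0 < acc) :
    ∃ γ > 0, ∀ y, b - γ < y → y < b → |g y - M| < acc := by
  rw [Metric.tendsto_nhdsWithin_nhds] at hM
  obtain ⟨γ, hγ, hg⟩ := hM acc hacc
  refine ⟨γ, hγ, fun y h1 h2 => ?_⟩
  have := hg (show y ∈ Iio b from h2) (by rw [Real.dist_eq, abs_lt]; constructor <;> linarith)
  rwa [Real.dist_eq] at this
 
lemma collar_right {g : ℝ → ℝ} {b M : ℝ} (hM : Tendsto g (𝓝[>] b) (𝓝 M))
    {acc : ℝ} (hacc : 0 < acc) :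
    ∃ γ > 0, ∀ y, b < y → y < b + γ → |g y - M| < acc := by
  rw [Metric.tendsto_nhdsWithin_nhds] at hM
  obtain ⟨γ, hγ, hg⟩ := hM acc hacc
  refine ⟨γ, hγ, fun y h1 h2 => ?_⟩
  have := hg (show y ∈ Ioi b from h1) (by rw [Real.dist_eq, abs_lt]; constructor <;> linarith)
  rwa [Real.dist_eq] at this

/-- limit of a map into a closed set lies in the closed set (left version at `b`, for
values of `f` on `Ioo a b` with `a < b`). -/
lemma lim_mem_Icc_left {g : ℝ → ℝ} {b M : ℝ} (hM : Tendsto g (𝓝[<] b) (𝓝 M))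
    (hb : ∀ y, 0 < y → y < b → g y ∈ Icc (0:ℝ) 1) (h0 : 0 < b) : M ∈ Icc (0:ℝ) 1 := by
  refine isClosed_Icc.mem_of_tendsto hM ?_
  have hmem : b ∈ Ioc (max 0 (b-1)) b := by
    constructor
    · rcases le_or_gt 0 (b-1) with h | h
      · rw [max_eq_right h]; linarith
      · rw [max_eq_left h.le]; linarith
    · exact le_rfl
  filter_upwards [Ioo_mem_nhdsLT_of_mem hmem] with y hy
  have hy0 : 0 < y := lt_of_le_of_lt (le_max_left _ _) hy.1
  exact hb y hy0 hy.2

lemma lim_mem_Icc_right {g : ℝ → ℝ} {b M : ℝ} (hM : Tendsto g (𝓝[>] b) (𝓝 M))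
    (hb : ∀ y, b < y → y < 1 → g y ∈ Icc (0:ℝ) 1) (h0 : b < 1) : M ∈ Icc (0:ℝ) 1 := by
  refine isClosed_Icc.mem_of_tendsto hM ?_
  have hmem : b ∈ Ico b (min 1 (b+1)) := by
    constructor
    · exact le_rfl
    · rcases le_or_gt 1 (b+1) with h | h
      · rw [min_eq_left h]; linarith
      · rw [min_eq_right h.le]; linarith
  filter_upwards [Ioo_mem_nhdsGT_of_mem hmem] with y hy
  have hy1 : y < 1 := lt_of_lt_of_le hy.2 (min_le_left _ _)
  exact hb y hy.1 hy1

/-- helper to select a subinterval avoiding one point. -/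
lemma avoid_point {a b v : ℝ} (hab : a < b) :
    ∃ a' b', a ≤ a' ∧ a' < b' ∧ b' ≤ b ∧ v ∉ Ioo a' b' := by
  rcases le_or_gt v ((a+b)/2) with h | h
  · exact ⟨(a+b)/2, b, by linarith, by linarith, le_rfl, fun hv => absurd hv.1 (not_lt.mpr h)⟩
  · exact ⟨a, (a+b)/2, le_rfl, by linarith, by linarith, fun hv => absurd hv.2 (not_lt.mpr h.le)⟩


/-! ### Endpoint machinery -/

lemma PC.pmN : StrictMonoOn P.f (Ioo (P.z P.n) 1) ∨ StrictAntiOn P.f (Ioo (P.z P.n) 1) := by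
  have := P.hpm P.n le_rfl
  rwa [P.hzn] at this

lemma PC.pm0 : StrictMonoOn P.f (Ioo 0 (P.z 1)) ∨ StrictAntiOn P.f (Ioo 0 (P.z 1)) := by
  have := P.hpm 0 (Nat.zero_le _)
  rwa [P.hz0] at this

lemma PC.collar1_sub : Ioo (1 - P.ε) 1 ⊆ Ioo (P.z P.n) 1 := by
  intro x hx
  have h1 := P.one_sub_eps_gt
  have h2 := P.hε
  exact ⟨by linarith [hx.1], hx.2⟩

lemma PC.collar0_sub : Ioo (0:ℝ) P.ε ⊆ Ioo 0 (P.z 1) := by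
  intro x hx
  have h1 := P.gap01
  have h2 := P.hε
  exact ⟨hx.1, by linarith [hx.2]⟩

lemma PC.M1_mem : P.M1 ∈ Icc (0:ℝ) 1 :=
  lim_mem_Icc_left P.hM1 (fun y h1 h2 => P.hf ⟨h1.le, h2.le⟩) one_pos

lemma PC.M0_mem : P.M0 ∈ Icc (0:ℝ) 1 :=
  lim_mem_Icc_right P.hM0 (fun y h1 h2 => P.hf ⟨h1.le, h2.le⟩) one_pos

lemma PC.L_mem {j : ℕ} (hj1 : 1 ≤ j) (hjn : j ≤ P.n) : P.L j ∈ Icc (0:ℝ) 1 :=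
  lim_mem_Icc_left (P.hL j hj1 hjn)
    (fun y h1 h2 => P.hf ⟨h1.le, le_trans h2.le (P.z_mem_Icc (show j ≤ P.n + 1 by omega)).2⟩)
    (by have h := P.hzlt 0 j (by omega) (by omega); rw [P.hz0] at h; exact h)

lemma PC.R_mem {j : ℕ} (hj1 : 1 ≤ j) (hjn : j ≤ P.n) : P.R j ∈ Icc (0:ℝ) 1 :=
  lim_mem_Icc_right (P.hR j hj1 hjn)
    (fun y h1 h2 => P.hf ⟨le_trans (P.z_mem_Icc (show j ≤ P.n + 1 by omega)).1 h1.le, h2.le⟩)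
    (by have h := P.hzlt j (P.n+1) (by omega) le_rfl; rw [P.hzn] at h; exact h)

def PC.EntryFact1 (s : ℕ) (xs : ℕ → ℝ) : Prop :=
  1 ≤ s ∧ (∀ i, i < s → xs i ∈ Icc (0:ℝ) 1) ∧
  (∀ i, i + 1 < s → |P.f (xs i) - xs (i+1)| < P.δ) ∧ xs (s-1) = 1 ∧
  (∀ X : ℕ → ℝ, (∀ i, X i ∈ Icc (0:ℝ) 1) → (∀ i, |P.f (X i) - X (i+1)| < P.δ) →
    (∀ i, i < s → X i = xs i) →
    ∀ zz, zz ∈ Icc (0:ℝ) 1 → (∀ i, |P.f^[i] zz - X i| < P.ε) →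
    P.f^[s-1] zz ∈ Ioo (1 - P.ε) 1)

def PC.EntryFact0 (s : ℕ) (xs : ℕ → ℝ) : Prop :=
  1 ≤ s ∧ (∀ i, i < s → xs i ∈ Icc (0:ℝ) 1) ∧
  (∀ i, i + 1 < s → |P.f (xs i) - xs (i+1)| < P.δ) ∧ xs (s-1) = 0 ∧
  (∀ X : ℕ → ℝ, (∀ i, X i ∈ Icc (0:ℝ) 1) → (∀ i, |P.f (X i) - X (i+1)| < P.δ) →
    (∀ i, i < s → X i = xs i) →
    ∀ zz, zz ∈ Icc (0:ℝ) 1 → (∀ i, |P.f^[i] zz - X i| < P.ε) →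
    P.f^[s-1] zz ∈ Ioo 0 P.ε)

/-! ### Leaves at endpoint 1 -/

lemma PC.leaf_ne1 {s : ℕ} {xs : ℕ → ℝ} (h : P.EntryFact1 s xs) (hne : P.f 1 ≠ P.M1) :
    False := by
  obtain ⟨hs, hI, hV, hlast, hiv⟩ := h
  obtain ⟨hq, hcol⟩ := P.hq1 hne
  have hwI : P.f 1 ∈ Icc (0:ℝ) 1 := P.hf ⟨zero_le_one, le_rfl⟩
  have hjump : |P.f (xs (s-1)) - P.f 1| < P.δ := by
    rw [hlast]
    simpa using P.hδ0
  obtain ⟨hXI, hXV⟩ := P.ext_valid s hs xs hI hV hwI hjump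
  obtain ⟨zz, hzzI, hzz⟩ := P.hsh _ hXI hXV
  have hy1 : P.f^[s-1] zz ∈ Ioo (1 - P.ε) 1 :=
    hiv _ hXI hXV (fun i hi => P.extO_lt hi) zz hzzI hzz
  have hes : P.f^[s] zz = P.f (P.f^[s-1] zz) := P.iter_pred hs zz
  have hcol1 : |P.f (P.f^[s-1] zz) - P.M1| < |P.f 1 - P.M1| / 4 :=
    hcol _ (by have := hy1.1; have := P.hε; linarith) hy1.2
  have htr : |P.f^[s] zz - P.f 1| < P.ε := by
    have h0 := hzz s
    rwa [P.extO_s] at h0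
  rw [hes] at htr
  have htri : |P.f 1 - P.M1| ≤ |P.f (P.f^[s-1] zz) - P.f 1| + |P.f (P.f^[s-1] zz) - P.M1| := by
    have h0 := abs_sub_le (P.f 1) (P.f (P.f^[s-1] zz)) (P.M1)
    rw [abs_sub_comm (P.f 1) (P.f (P.f^[s-1] zz))] at h0
    linarith
  have := P.hε
  linarith

lemma PC.leaf_mono1 {s : ℕ} {xs : ℕ → ℝ} (h : P.EntryFact1 s xs)
    (hm : StrictMonoOn P.f (Ioo (P.z P.n) 1)) (heq : P.f 1 = P.M1) (hlt : P.M1 < 1) :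
    False := by
  obtain ⟨hs, hI, hV, hlast, hiv⟩ := h
  have hδ2 : 0 < P.δ / 2 := by linarith [P.hδ0]
  refine P.endgame s hs xs hI hV (P.M1) (min 1 (P.M1 + P.δ/2)) ?_ ?_ ?_ ?_
  · exact lt_min hlt (by linarith)
  · intro x hx
    exact ⟨le_trans P.M1_mem.1 hx.1.le, le_trans hx.2.le (min_le_left _ _)⟩
  · intro w hw
    rw [hlast, heq]
    have h2 : w < P.M1 + P.δ/2 := lt_of_lt_of_le hw.2 (min_le_right _ _)
    rw [abs_lt]
    constructor <;> [linarith [hw.1]; linarith [P.hδ0, hw.1]]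
  · intro w hw zz hzzI htrack
    have hwI : w ∈ Icc (0:ℝ) 1 :=
      ⟨le_trans P.M1_mem.1 hw.1.le, le_trans hw.2.le (min_le_left _ _)⟩
    have hXI : ∀ i, P.extO xs s w i ∈ Icc (0:ℝ) 1 := by
      intro i
      by_cases hi : i < s
      · rw [P.extO_lt hi]; exact hI i hi
      · rw [P.extO_ge (by omega)]; exact P.iter_mem hwI _
    have hXV : ∀ i, |P.f (P.extO xs s w i) - P.extO xs s w (i+1)| < P.δ := by
      have hjump : |P.f (xs (s-1)) - w| < P.δ := by
        rw [hlast, heq, abs_lt]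
        have h2 : w < P.M1 + P.δ/2 := lt_of_lt_of_le hw.2 (min_le_right _ _)
        constructor <;> [linarith [hw.1]; linarith [P.hδ0, hw.1]]
      exact (P.ext_valid s hs xs hI hV hwI hjump).2
    have hy1 : P.f^[s-1] zz ∈ Ioo (1 - P.ε) 1 :=
      hiv _ hXI hXV (fun i hi => P.extO_lt hi) zz hzzI htrack
    have hbelow : P.f (P.f^[s-1] zz) < P.M1 :=
      strict_below_right hm P.hM1 (P.collar1_sub hy1)
    intro heqw
    rw [P.iter_pred hs zz] at heqw
    rw [heqw] at hbelow
    exact absurd hbelow (not_lt.mpr hw.1.le)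

lemma PC.leaf_anti1 {s : ℕ} {xs : ℕ → ℝ} (h : P.EntryFact1 s xs)
    (hm : StrictAntiOn P.f (Ioo (P.z P.n) 1)) (heq : P.f 1 = P.M1) (hlt : 0 < P.M1) :
    False := by
  obtain ⟨hs, hI, hV, hlast, hiv⟩ := h
  have hδ2 : 0 < P.δ / 2 := by linarith [P.hδ0]
  refine P.endgame s hs xs hI hV (max 0 (P.M1 - P.δ/2)) P.M1 ?_ ?_ ?_ ?_
  · rcases le_or_gt 0 (P.M1 - P.δ/2) with h0 | h0
    · rw [max_eq_right h0]; linarith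
    · rw [max_eq_left h0.le]; linarith
  · intro x hx
    exact ⟨le_trans (le_max_left _ _) hx.1.le, le_trans hx.2.le P.M1_mem.2⟩
  · intro w hw
    rw [hlast, heq]
    have h2 : P.M1 - P.δ/2 < w := lt_of_le_of_lt (le_max_right _ _) hw.1
    rw [abs_lt]
    constructor <;> [linarith [hw.2]; linarith [P.hδ0, hw.2]]
  · intro w hw zz hzzI htrack
    have hwI : w ∈ Icc (0:ℝ) 1 :=
      ⟨le_trans (le_max_left _ _) hw.1.le, le_trans hw.2.le P.M1_mem.2⟩
    have hjump : |P.f (xs (s-1)) - w| < P.δ := by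
      rw [hlast, heq, abs_lt]
      have h2 : P.M1 - P.δ/2 < w := lt_of_le_of_lt (le_max_right _ _) hw.1
      constructor <;> [linarith [hw.2]; linarith [P.hδ0, hw.2]]
    obtain ⟨hXI, hXV⟩ := P.ext_valid s hs xs hI hV hwI hjump
    have hy1 : P.f^[s-1] zz ∈ Ioo (1 - P.ε) 1 :=
      hiv _ hXI hXV (fun i hi => P.extO_lt hi) zz hzzI htrack
    have habove : P.M1 < P.f (P.f^[s-1] zz) :=
      strict_above_right hm P.hM1 (P.collar1_sub hy1)
    intro heqw
    rw [P.iter_pred hs zz] at heqw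
    rw [heqw] at habove
    exact absurd habove (not_lt.mpr hw.2.le)

lemma PC.leaf_trap1 {s : ℕ} {xs : ℕ → ℝ} (h : P.EntryFact1 s xs)
    (hm : StrictMonoOn P.f (Ioo (P.z P.n) 1)) (hf1 : P.f 1 = 1) : False := by
  obtain ⟨hs, hI, hV, hlast, hiv⟩ := h
  have hfix : ∀ k, P.f^[k] (1:ℝ) = 1 := fun k => Function.iterate_fixed hf1 k
  have hjump : |P.f (xs (s-1)) - (1:ℝ)| < P.δ := by
    rw [hlast, hf1]
    simpa using P.hδ0
  obtain ⟨hXI, hXV⟩ := P.ext_valid s hs xs hI hV ⟨zero_le_one, le_rfl⟩ hjump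
  obtain ⟨zz, hzzI, hzz⟩ := P.hsh _ hXI hXV
  have hy1 : P.f^[s-1] zz ∈ Ioo (1 - P.ε) 1 :=
    hiv _ hXI hXV (fun i hi => P.extO_lt hi) zz hzzI hzz
  have hclaim : ∀ i, P.f^[s-1+i] zz ∈ Ioo (1 - P.ε) 1 := by
    intro i
    induction i with
    | zero => simpa using hy1
    | succ i ih =>
      have hmem : P.f^[s-1+i] zz ∈ Ioo (P.z P.n) 1 := P.collar1_sub ih
      have hlt1 : P.f (P.f^[s-1+i] zz) < 1 :=
        lt_of_lt_of_le (strict_below_right hm P.hM1 hmem) P.M1_mem.2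
      have hgt : 1 - P.ε < P.f (P.f^[s-1+i] zz) := by
        have htr := hzz (s + i)
        have hX : P.extO xs s (1:ℝ) (s+i) = 1 := by
          rw [P.extO_ge (by omega)]
          exact hfix _
        rw [hX] at htr
        have he : P.f^[s+i] zz = P.f (P.f^[s-1+i] zz) := by
          rw [show s+i = (s-1+i)+1 by omega, Function.iterate_succ_apply']
        rw [he] at htr
        have := abs_lt.mp htr
        linarith [this.1]
      have he2 : s-1+(i+1) = (s-1+i)+1 := by omega
      rw [he2, Function.iterate_succ_apply']
      exact ⟨hgt, hlt1⟩
  refine P.trap (fun i => P.f^[s-1+i] zz) (fun _ => 1) ?_ ?_ ?_ ?_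
  · simpa using (hclaim 0).2
  · intro x hx
    have h0 := (hclaim 0)
    constructor
    · have : (0:ℝ) ≤ P.f^[s-1+0] zz := (P.iter_mem hzzI _).1
      linarith [hx.1]
    · exact hx.2.le
  · intro i hmem
    have h1 := P.gap1n
    have h2 := (hclaim i).1
    have := hmem.1
    have := P.hε
    linarith [hmem.1]
  · intro i u hu
    have hAmem : P.f^[s-1+i] zz ∈ Ioo (P.z P.n) 1 := P.collar1_sub (hclaim i)
    have humem : u ∈ Ioo (P.z P.n) 1 := ⟨lt_trans hAmem.1 hu.1, hu.2⟩
    constructor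
    · have he2 : s-1+(i+1) = (s-1+i)+1 := by omega
      rw [he2, Function.iterate_succ_apply']
      exact hm hAmem humem hu.1
    · exact lt_of_lt_of_le (strict_below_right hm P.hM1 humem) P.M1_mem.2

lemma PC.chain1to0 {s : ℕ} {xs : ℕ → ℝ} (h : P.EntryFact1 s xs)
    (hm : StrictAntiOn P.f (Ioo (P.z P.n) 1)) (hf1 : P.f 1 = 0) :
    P.EntryFact0 (s+1) (fun i => if i < s then xs i else 0) := by
  obtain ⟨hs, hI, hV, hlast, hiv⟩ := h
  refine ⟨by omega, ?_, ?_, ?_, ?_⟩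
  · intro i hi
    show (if i < s then xs i else (0:ℝ)) ∈ Icc 0 1
    by_cases h2 : i < s
    · rw [if_pos h2]; exact hI i h2
    · rw [if_neg h2]; exact ⟨le_rfl, zero_le_one⟩
  · intro i hi
    show |P.f (if i < s then xs i else (0:ℝ)) - (if i + 1 < s then xs (i+1) else (0:ℝ))| < P.δ
    rcases Nat.lt_trichotomy (i+1) s with h2 | h2 | h2
    · rw [if_pos (by omega), if_pos h2]
      exact hV i h2
    · rw [if_pos (by omega), if_neg (by omega), show i = s - 1 by omega, hlast, hf1]
      simpa using P.hδ0
    · omega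
  · show (if s + 1 - 1 < s then xs (s + 1 - 1) else (0:ℝ)) = 0
    rw [if_neg (by omega)]
  · intro X hXI hXV hagree zz hzzI htrack
    have hy1 : P.f^[s-1] zz ∈ Ioo (1 - P.ε) 1 := by
      refine hiv X hXI hXV ?_ zz hzzI htrack
      intro i hi
      have h3 := hagree i (by omega)
      simp only [if_pos hi] at h3
      exact h3
    have hes : P.f^[s+1-1] zz = P.f (P.f^[s-1] zz) := by
      rw [show s + 1 - 1 = (s-1) + 1 by omega, Function.iterate_succ_apply']
    rw [hes]
    constructor
    · have hM1' : Tendsto P.f (𝓝[<] (1:ℝ)) (𝓝 P.M1) := P.hM1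
      have h4 := strict_above_right hm hM1' (P.collar1_sub hy1)
      have h5 := P.M1_mem.1
      linarith
    · have htr := htrack s
      have hXs : X s = 0 := by
        have h3 := hagree s (by omega)
        simp only [if_neg (by omega : ¬ s < s)] at h3
        exact h3
      rw [hXs] at htr
      have he : P.f^[s] zz = P.f (P.f^[s-1] zz) := P.iter_pred hs zz
      rw [he] at htr
      have h5 := abs_lt.mp htr
      simp only [sub_zero] at h5
      linarith [h5.1]


/-! ### Leaves at endpoint 0 -/

lemma PC.leaf_ne0 {s : ℕ} {xs : ℕ → ℝ} (h : P.EntryFact0 s xs) (hne : P.f 0 ≠ P.M0) :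
    False := by
  obtain ⟨hs, hI, hV, hlast, hiv⟩ := h
  obtain ⟨hq, hcol⟩ := P.hq0 hne
  have hwI : P.f 0 ∈ Icc (0:ℝ) 1 := P.hf ⟨le_rfl, zero_le_one⟩
  have hjump : |P.f (xs (s-1)) - P.f 0| < P.δ := by
    rw [hlast]
    simpa using P.hδ0
  obtain ⟨hXI, hXV⟩ := P.ext_valid s hs xs hI hV hwI hjump
  obtain ⟨zz, hzzI, hzz⟩ := P.hsh _ hXI hXV
  have hy1 : P.f^[s-1] zz ∈ Ioo 0 P.ε :=
    hiv _ hXI hXV (fun i hi => P.extO_lt hi) zz hzzI hzz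
  have hes : P.f^[s] zz = P.f (P.f^[s-1] zz) := P.iter_pred hs zz
  have hcol1 : |P.f (P.f^[s-1] zz) - P.M0| < |P.f 0 - P.M0| / 4 :=
    hcol _ hy1.1 (by have := hy1.2; have := P.hε; linarith)
  have htr : |P.f^[s] zz - P.f 0| < P.ε := by
    have h0 := hzz s
    rwa [P.extO_s] at h0
  rw [hes] at htr
  have htri : |P.f 0 - P.M0| ≤ |P.f (P.f^[s-1] zz) - P.f 0| + |P.f (P.f^[s-1] zz) - P.M0| := by
    have h0 := abs_sub_le (P.f 0) (P.f (P.f^[s-1] zz)) (P.M0)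
    rw [abs_sub_comm (P.f 0) (P.f (P.f^[s-1] zz))] at h0
    linarith
  have := P.hε
  linarith

lemma PC.leaf_incr0 {s : ℕ} {xs : ℕ → ℝ} (h : P.EntryFact0 s xs)
    (hm : StrictMonoOn P.f (Ioo 0 (P.z 1))) (heq : P.f 0 = P.M0) (hlt : 0 < P.M0) :
    False := by
  obtain ⟨hs, hI, hV, hlast, hiv⟩ := h
  have hδ2 : 0 < P.δ / 2 := by linarith [P.hδ0]
  refine P.endgame s hs xs hI hV (max 0 (P.M0 - P.δ/2)) P.M0 ?_ ?_ ?_ ?_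
  · rcases le_or_gt 0 (P.M0 - P.δ/2) with h0 | h0
    · rw [max_eq_right h0]; linarith
    · rw [max_eq_left h0.le]; linarith
  · intro x hx
    exact ⟨le_trans (le_max_left _ _) hx.1.le, le_trans hx.2.le P.M0_mem.2⟩
  · intro w hw
    rw [hlast, heq]
    have h2 : P.M0 - P.δ/2 < w := lt_of_le_of_lt (le_max_right _ _) hw.1
    rw [abs_lt]
    constructor <;> [linarith [hw.2]; linarith [P.hδ0, hw.2]]
  · intro w hw zz hzzI htrack
    have hwI : w ∈ Icc (0:ℝ) 1 :=
      ⟨le_trans (le_max_left _ _) hw.1.le, le_trans hw.2.le P.M0_mem.2⟩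
    have hjump : |P.f (xs (s-1)) - w| < P.δ := by
      rw [hlast, heq, abs_lt]
      have h2 : P.M0 - P.δ/2 < w := lt_of_le_of_lt (le_max_right _ _) hw.1
      constructor <;> [linarith [hw.2]; linarith [P.hδ0, hw.2]]
    obtain ⟨hXI, hXV⟩ := P.ext_valid s hs xs hI hV hwI hjump
    have hy1 : P.f^[s-1] zz ∈ Ioo 0 P.ε :=
      hiv _ hXI hXV (fun i hi => P.extO_lt hi) zz hzzI htrack
    have habove : P.M0 < P.f (P.f^[s-1] zz) :=
      strict_above_left hm P.hM0 (P.collar0_sub hy1)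
    intro heqw
    rw [P.iter_pred hs zz] at heqw
    rw [heqw] at habove
    exact absurd habove (not_lt.mpr hw.2.le)

lemma PC.leaf_decr0 {s : ℕ} {xs : ℕ → ℝ} (h : P.EntryFact0 s xs)
    (hm : StrictAntiOn P.f (Ioo 0 (P.z 1))) (heq : P.f 0 = P.M0) (hlt : P.M0 < 1) :
    False := by
  obtain ⟨hs, hI, hV, hlast, hiv⟩ := h
  have hδ2 : 0 < P.δ / 2 := by linarith [P.hδ0]
  refine P.endgame s hs xs hI hV P.M0 (min 1 (P.M0 + P.δ/2)) ?_ ?_ ?_ ?_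
  · exact lt_min hlt (by linarith)
  · intro x hx
    exact ⟨le_trans P.M0_mem.1 hx.1.le, le_trans hx.2.le (min_le_left _ _)⟩
  · intro w hw
    rw [hlast, heq]
    have h2 : w < P.M0 + P.δ/2 := lt_of_lt_of_le hw.2 (min_le_right _ _)
    rw [abs_lt]
    constructor <;> [linarith [hw.1]; linarith [P.hδ0, hw.1]]
  · intro w hw zz hzzI htrack
    have hwI : w ∈ Icc (0:ℝ) 1 :=
      ⟨le_trans P.M0_mem.1 hw.1.le, le_trans hw.2.le (min_le_left _ _)⟩
    have hjump : |P.f (xs (s-1)) - w| < P.δ := by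
      rw [hlast, heq, abs_lt]
      have h2 : w < P.M0 + P.δ/2 := lt_of_lt_of_le hw.2 (min_le_right _ _)
      constructor <;> [linarith [hw.1]; linarith [P.hδ0, hw.1]]
    obtain ⟨hXI, hXV⟩ := P.ext_valid s hs xs hI hV hwI hjump
    have hy1 : P.f^[s-1] zz ∈ Ioo 0 P.ε :=
      hiv _ hXI hXV (fun i hi => P.extO_lt hi) zz hzzI htrack
    have hbelow : P.f (P.f^[s-1] zz) < P.M0 :=
      strict_below_left hm P.hM0 (P.collar0_sub hy1)
    intro heqw
    rw [P.iter_pred hs zz] at heqw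
    rw [heqw] at hbelow
    exact absurd hbelow (not_lt.mpr hw.1.le)

lemma PC.leaf_trap0 {s : ℕ} {xs : ℕ → ℝ} (h : P.EntryFact0 s xs)
    (hm : StrictMonoOn P.f (Ioo 0 (P.z 1))) (hf0 : P.f 0 = 0) : False := by
  obtain ⟨hs, hI, hV, hlast, hiv⟩ := h
  have hfix : ∀ k, P.f^[k] (0:ℝ) = 0 := fun k => Function.iterate_fixed hf0 k
  have hjump : |P.f (xs (s-1)) - (0:ℝ)| < P.δ := by
    rw [hlast, hf0]
    simpa using P.hδ0
  obtain ⟨hXI, hXV⟩ := P.ext_valid s hs xs hI hV ⟨le_rfl, zero_le_one⟩ hjump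
  obtain ⟨zz, hzzI, hzz⟩ := P.hsh _ hXI hXV
  have hy1 : P.f^[s-1] zz ∈ Ioo 0 P.ε :=
    hiv _ hXI hXV (fun i hi => P.extO_lt hi) zz hzzI hzz
  have hclaim : ∀ i, P.f^[s-1+i] zz ∈ Ioo 0 P.ε := by
    intro i
    induction i with
    | zero => simpa using hy1
    | succ i ih =>
      have hmem : P.f^[s-1+i] zz ∈ Ioo 0 (P.z 1) := P.collar0_sub ih
      have hgt0 : 0 < P.f (P.f^[s-1+i] zz) :=
        lt_of_le_of_lt P.M0_mem.1 (strict_above_left hm P.hM0 hmem)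
      have hlte : P.f (P.f^[s-1+i] zz) < P.ε := by
        have htr := hzz (s + i)
        have hX : P.extO xs s (0:ℝ) (s+i) = 0 := by
          rw [P.extO_ge (by omega)]
          exact hfix _
        rw [hX] at htr
        have he : P.f^[s+i] zz = P.f (P.f^[s-1+i] zz) := by
          rw [show s+i = (s-1+i)+1 by omega, Function.iterate_succ_apply']
        rw [he] at htr
        have h6 := abs_lt.mp htr
        simp only [sub_zero] at h6
        linarith [h6.2]
      have he2 : s-1+(i+1) = (s-1+i)+1 := by omega
      rw [he2, Function.iterate_succ_apply']
      exact ⟨hgt0, hlte⟩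
  refine P.trap (fun _ => 0) (fun i => P.f^[s-1+i] zz) ?_ ?_ ?_ ?_
  · simpa using (hclaim 0).1
  · intro x hx
    constructor
    · exact hx.1.le
    · exact le_trans hx.2.le (P.iter_mem hzzI _).2
  · intro i hmem
    have h1 := P.gap01
    have h2 := (hclaim i).2
    have := P.hε
    linarith [hmem.2]
  · intro i u hu
    have hBmem : P.f^[s-1+i] zz ∈ Ioo 0 (P.z 1) := P.collar0_sub (hclaim i)
    have humem : u ∈ Ioo 0 (P.z 1) := ⟨hu.1, lt_trans hu.2 hBmem.2⟩
    constructor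
    · exact lt_of_le_of_lt P.M0_mem.1 (strict_above_left hm P.hM0 humem)
    · have he2 : s-1+(i+1) = (s-1+i)+1 := by omega
      rw [he2, Function.iterate_succ_apply']
      exact hm humem hBmem hu.2

lemma PC.chain0to1 {s : ℕ} {xs : ℕ → ℝ} (h : P.EntryFact0 s xs)
    (hm : StrictAntiOn P.f (Ioo 0 (P.z 1))) (hf0 : P.f 0 = 1) :
    P.EntryFact1 (s+1) (fun i => if i < s then xs i else 1) := by
  obtain ⟨hs, hI, hV, hlast, hiv⟩ := h
  refine ⟨by omega, ?_, ?_, ?_, ?_⟩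
  · intro i hi
    show (if i < s then xs i else (1:ℝ)) ∈ Icc 0 1
    by_cases h2 : i < s
    · rw [if_pos h2]; exact hI i h2
    · rw [if_neg h2]; exact ⟨zero_le_one, le_rfl⟩
  · intro i hi
    show |P.f (if i < s then xs i else (1:ℝ)) - (if i + 1 < s then xs (i+1) else (1:ℝ))| < P.δ
    rcases Nat.lt_trichotomy (i+1) s with h2 | h2 | h2
    · rw [if_pos (by omega), if_pos h2]
      exact hV i h2
    · rw [if_pos (by omega), if_neg (by omega), show i = s - 1 by omega, hlast, hf0]
      simpa using P.hδ0
    · omega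
  · show (if s + 1 - 1 < s then xs (s + 1 - 1) else (1:ℝ)) = 1
    rw [if_neg (by omega)]
  · intro X hXI hXV hagree zz hzzI htrack
    have hy1 : P.f^[s-1] zz ∈ Ioo 0 P.ε := by
      refine hiv X hXI hXV ?_ zz hzzI htrack
      intro i hi
      have h3 := hagree i (by omega)
      simp only [if_pos hi] at h3
      exact h3
    have hes : P.f^[s+1-1] zz = P.f (P.f^[s-1] zz) := by
      rw [show s + 1 - 1 = (s-1) + 1 by omega, Function.iterate_succ_apply']
    rw [hes]
    constructor
    · have htr := htrack s
      have hXs : X s = 1 := by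
        have h3 := hagree s (by omega)
        simp only [if_neg (by omega : ¬ s < s)] at h3
        exact h3
      rw [hXs] at htr
      have he : P.f^[s] zz = P.f (P.f^[s-1] zz) := P.iter_pred hs zz
      rw [he] at htr
      have h5 := abs_lt.mp htr
      linarith [h5.1]
    · have h4 := strict_below_left hm P.hM0 (P.collar0_sub hy1)
      have h5 := P.M0_mem.2
      linarith

lemma PC.leaf_cycle {s : ℕ} {xs : ℕ → ℝ} (h : P.EntryFact1 s xs)
    (hmN : StrictAntiOn P.f (Ioo (P.z P.n) 1)) (hf1 : P.f 1 = 0)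
    (hm0 : StrictAntiOn P.f (Ioo 0 (P.z 1))) (hf0 : P.f 0 = 1) : False := by
  obtain ⟨hs, hI, hV, hlast, hiv⟩ := h
  have horb : ∀ k, P.f^[k] (0:ℝ) = if k % 2 = 0 then 0 else 1 := by
    intro k
    induction k with
    | zero => simp
    | succ k ih =>
      rw [Function.iterate_succ_apply', ih]
      rcases Nat.even_or_odd k with he | ho
      · have h1 : k % 2 = 0 := Nat.even_iff.mp he
        have h2 : (k+1) % 2 = 1 := by omega
        rw [if_pos h1, h2, hf0]
        norm_num
      · have h1 : k % 2 = 1 := Nat.odd_iff.mp ho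
        have h2 : (k+1) % 2 = 0 := by omega
        rw [if_neg (by omega : ¬ k % 2 = 0), h2, hf1]
        norm_num
  have hjump : |P.f (xs (s-1)) - (0:ℝ)| < P.δ := by
    rw [hlast, hf1]
    simpa using P.hδ0
  obtain ⟨hXI, hXV⟩ := P.ext_valid s hs xs hI hV ⟨le_rfl, zero_le_one⟩ hjump
  obtain ⟨zz, hzzI, hzz⟩ := P.hsh _ hXI hXV
  have hy1 : P.f^[s-1] zz ∈ Ioo (1 - P.ε) 1 :=
    hiv _ hXI hXV (fun i hi => P.extO_lt hi) zz hzzI hzz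
  -- alternating claim
  have htrX : ∀ i, |P.f^[s+i] zz - (if i % 2 = 0 then (0:ℝ) else 1)| < P.ε := by
    intro i
    have htr := hzz (s + i)
    have hX : P.extO xs s (0:ℝ) (s+i) = if i % 2 = 0 then (0:ℝ) else 1 := by
      rw [P.extO_ge (by omega), show s + i - s = i by omega]
      exact horb i
    rwa [hX] at htr
  have hclaim : ∀ i, (i % 2 = 0 → P.f^[s-1+i] zz ∈ Ioo (1 - P.ε) 1) ∧
      (i % 2 = 1 → P.f^[s-1+i] zz ∈ Ioo 0 P.ε) := by
    intro i
    induction i with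
    | zero => exact ⟨fun _ => by simpa using hy1, fun hh => by omega⟩
    | succ i ih =>
      have he2 : s-1+(i+1) = (s-1+i)+1 := by omega
      have hiter : P.f^[s-1+(i+1)] zz = P.f (P.f^[s-1+i] zz) := by
        rw [he2, Function.iterate_succ_apply']
      have hiter2 : P.f^[s+i] zz = P.f (P.f^[s-1+i] zz) := by
        rw [show s+i = (s-1+i)+1 by omega, Function.iterate_succ_apply']
      rcases Nat.even_or_odd i with hev | hod
      · have h1 : i % 2 = 0 := Nat.even_iff.mp hev
        have h2 : (i+1) % 2 = 1 := by omega
        have hy := ih.1 h1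
        have hmem : P.f^[s-1+i] zz ∈ Ioo (P.z P.n) 1 := P.collar1_sub hy
        have hgt0 : 0 < P.f (P.f^[s-1+i] zz) := by
          have := strict_above_right hmN P.hM1 hmem
          linarith [P.M1_mem.1]
        have hlte : P.f (P.f^[s-1+i] zz) < P.ε := by
          have h3 := htrX i
          rw [if_pos h1, hiter2] at h3
          have h4 := abs_lt.mp h3
          simp only [sub_zero] at h4
          linarith [h4.2]
        refine ⟨fun hh => by omega, fun _ => ?_⟩
        rw [hiter]
        exact ⟨hgt0, hlte⟩
      · have h1 : i % 2 = 1 := Nat.odd_iff.mp hod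
        have h2 : (i+1) % 2 = 0 := by omega
        have hy := ih.2 h1
        have hmem : P.f^[s-1+i] zz ∈ Ioo 0 (P.z 1) := P.collar0_sub hy
        have hlt1 : P.f (P.f^[s-1+i] zz) < 1 := by
          have := strict_below_left hm0 P.hM0 hmem
          linarith [P.M0_mem.2]
        have hgte : 1 - P.ε < P.f (P.f^[s-1+i] zz) := by
          have h3 := htrX i
          rw [if_neg (by omega), hiter2] at h3
          have h4 := abs_lt.mp h3
          linarith [h4.1]
        refine ⟨fun _ => ?_, fun hh => by omega⟩
        rw [hiter]
        exact ⟨hgte, hlt1⟩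
  -- trap with alternating intervals
  refine P.trap (fun i => if i % 2 = 0 then P.f^[s-1+i] zz else 0)
    (fun i => if i % 2 = 0 then 1 else P.f^[s-1+i] zz) ?_ ?_ ?_ ?_
  · simp only [Nat.zero_mod, if_pos rfl]
    exact ((hclaim 0).1 rfl).2
  · intro x hx
    simp only [Nat.zero_mod, if_pos rfl] at hx
    constructor
    · exact le_trans (P.iter_mem hzzI _).1 hx.1.le
    · exact hx.2.le
  · intro i hmem
    rcases Nat.even_or_odd i with hev | hod
    · have h1 : i % 2 = 0 := Nat.even_iff.mp hev
      simp only [if_pos h1] at hmem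
      have h2 := ((hclaim i).1 h1).1
      have h3 := P.gap1n
      have := P.hε
      linarith [hmem.1]
    · have h1 : i % 2 = 1 := Nat.odd_iff.mp hod
      simp only [if_neg (by omega : ¬ i % 2 = 0)] at hmem
      have h2 := ((hclaim i).2 h1).2
      have h3 := P.gap01
      have := P.hε
      linarith [hmem.2]
  · intro i u hu
    have he2 : s-1+(i+1) = (s-1+i)+1 := by omega
    rcases Nat.even_or_odd i with hev | hod
    · have h1 : i % 2 = 0 := Nat.even_iff.mp hev
      have h2 : ¬ (i+1) % 2 = 0 := by omega
      simp only [if_pos h1] at hu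
      simp only [if_neg h2]
      have hy := (hclaim i).1 h1
      have hAmem : P.f^[s-1+i] zz ∈ Ioo (P.z P.n) 1 := P.collar1_sub hy
      have humem : u ∈ Ioo (P.z P.n) 1 := ⟨lt_trans hAmem.1 hu.1, hu.2⟩
      constructor
      · have := strict_above_right hmN P.hM1 humem
        linarith [P.M1_mem.1]
      · rw [he2, Function.iterate_succ_apply']
        exact hmN hAmem humem hu.1
    · have h1 : i % 2 = 1 := Nat.odd_iff.mp hod
      have h2 : (i+1) % 2 = 0 := by omega
      simp only [if_neg (by omega : ¬ i % 2 = 0)] at hu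
      simp only [if_pos h2]
      have hy := (hclaim i).2 h1
      have hBmem : P.f^[s-1+i] zz ∈ Ioo 0 (P.z 1) := P.collar0_sub hy
      have humem : u ∈ Ioo 0 (P.z 1) := ⟨hu.1, lt_trans hu.2 hBmem.2⟩
      constructor
      · rw [he2, Function.iterate_succ_apply']
        exact hm0 humem hBmem hu.2
      · have := strict_below_left hm0 P.hM0 humem
        linarith [P.M0_mem.2]


/-! ### Masters -/

lemma PC.master0aux {s : ℕ} {xs : ℕ → ℝ} (h : P.EntryFact0 s xs) (hf1 : P.f 1 = 0)
    (hmN : StrictAntiOn P.f (Ioo (P.z P.n) 1)) : False := by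
  rcases P.pm0 with hm | hm
  · by_cases h1 : P.f 0 = P.M0
    · rcases lt_or_eq_of_le P.M0_mem.1 with hlt | heq0
      · exact P.leaf_incr0 h hm h1 hlt
      · exact P.leaf_trap0 h hm (by rw [h1, ← heq0])
    · exact P.leaf_ne0 h h1
  · by_cases h1 : P.f 0 = P.M0
    · rcases lt_or_eq_of_le P.M0_mem.2 with hlt | heq1
      · exact P.leaf_decr0 h hm h1 hlt
      · have hf0 : P.f 0 = 1 := by rw [h1, heq1]
        exact P.leaf_cycle (P.chain0to1 h hm hf0) hmN hf1 hm hf0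
    · exact P.leaf_ne0 h h1

lemma PC.master1 {s : ℕ} {xs : ℕ → ℝ} (h : P.EntryFact1 s xs) : False := by
  rcases P.pmN with hm | hm
  · by_cases h1 : P.f 1 = P.M1
    · rcases lt_or_eq_of_le P.M1_mem.2 with hlt | heq1
      · exact P.leaf_mono1 h hm h1 hlt
      · exact P.leaf_trap1 h hm (by rw [h1, heq1])
    · exact P.leaf_ne1 h h1
  · by_cases h1 : P.f 1 = P.M1
    · rcases lt_or_eq_of_le P.M1_mem.1 with hlt | heq0
      · exact P.leaf_anti1 h hm h1 hlt
      · have hf1 : P.f 1 = 0 := by rw [h1, ← heq0]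
        exact P.master0aux (P.chain1to0 h hm hf1) hf1 hm
    · exact P.leaf_ne1 h h1

lemma PC.master0 {s : ℕ} {xs : ℕ → ℝ} (h : P.EntryFact0 s xs) : False := by
  rcases P.pm0 with hm | hm
  · by_cases h1 : P.f 0 = P.M0
    · rcases lt_or_eq_of_le P.M0_mem.1 with hlt | heq0
      · exact P.leaf_incr0 h hm h1 hlt
      · exact P.leaf_trap0 h hm (by rw [h1, ← heq0])
    · exact P.leaf_ne0 h h1
  · by_cases h1 : P.f 0 = P.M0
    · rcases lt_or_eq_of_le P.M0_mem.2 with hlt | heq1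
      · exact P.leaf_decr0 h hm h1 hlt
      · have hf0 : P.f 0 = 1 := by rw [h1, heq1]
        have h1fact := P.chain0to1 h hm hf0
        rcases P.pmN with hmN | hmN
        · by_cases h2 : P.f 1 = P.M1
          · rcases lt_or_eq_of_le P.M1_mem.2 with hlt2 | heq2
            · exact P.leaf_mono1 h1fact hmN h2 hlt2
            · exact P.leaf_trap1 h1fact hmN (by rw [h2, heq2])
          · exact P.leaf_ne1 h1fact h2
        · by_cases h2 : P.f 1 = P.M1
          · rcases lt_or_eq_of_le P.M1_mem.1 with hlt2 | heq2
            · exact P.leaf_anti1 h1fact hmN h2 hlt2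
            · have hf1 : P.f 1 = 0 := by rw [h2, ← heq2]
              exact P.leaf_cycle h1fact hmN hf1 hm hf0
          · exact P.leaf_ne1 h1fact h2
    · exact P.leaf_ne0 h h1


/-! ### Entry at the discontinuity -/

lemma PC.pm1 : StrictMonoOn P.f (Ioo (P.z 1) (P.z 2)) ∨ StrictAntiOn P.f (Ioo (P.z 1) (P.z 2)) :=
  P.hpm 1 P.hn

lemma PC.d1 : 8 * P.ε < |P.L 1 - P.R 1| := P.hd 1 le_rfl P.hn

lemma PC.eps_lt_one : P.ε < 1 := by
  have h1 := P.d1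
  have h2 := (P.L_mem le_rfl P.hn)
  have h3 := (P.R_mem le_rfl P.hn)
  have h4 : |P.L 1 - P.R 1| ≤ 1 := by
    rw [abs_le]
    constructor <;> [linarith [h2.1, h3.2]; linarith [h2.2, h3.1]]
  have := P.hε
  linarith

lemma PC.gap12 : 2 * P.ε < P.z 2 - P.z 1 := P.hgap 1 P.hn

/-- side analysis for shadows of left-entry pseudo-orbits. -/
lemma PC.left_side {p zz τ : ℝ} (hp1 : P.z 1 - P.ε < p) (hp2 : p < P.z 1)
    (hzzI : zz ∈ Icc (0:ℝ) 1) (h0 : |zz - p| < P.ε) (h1 : |P.f zz - τ| < P.ε)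
    (hτ : |τ - P.L 1| ≤ P.ε) :
    (P.z 1 - 2*P.ε < zz ∧ zz < P.z 1 ∧ 0 < zz) ∨ zz = P.z 1 := by
  have ha := abs_lt.mp h0
  have hg01 := P.gap01
  rcases lt_trichotomy zz (P.z 1) with hlt | heq | hgt
  · left
    refine ⟨by linarith [ha.1], hlt, by linarith [ha.1]⟩
  · right; exact heq
  · exfalso
    have hzu : zz < P.z 1 + 2*P.ε := by linarith [ha.2, P.hε]
    have hcol := P.hcolR 1 le_rfl P.hn zz hgt hzu
    have hd1 := P.d1
    have htri : |P.L 1 - P.R 1| ≤ |τ - P.L 1| + |P.f zz - τ| + |P.f zz - P.R 1| := by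
      have t1 : |P.L 1 - P.R 1| ≤ |P.L 1 - P.f zz| + |P.f zz - P.R 1| := abs_sub_le _ _ _
      have t2 : |P.L 1 - P.f zz| ≤ |P.L 1 - τ| + |τ - P.f zz| := abs_sub_le _ _ _
      rw [abs_sub_comm (P.L 1) τ, abs_sub_comm τ (P.f zz)] at t2
      linarith
    have := P.hε
    linarith

/-- side analysis for shadows of right-entry pseudo-orbits. -/
lemma PC.right_side {p zz τ : ℝ} (hp1 : P.z 1 < p) (hp2 : p < P.z 1 + P.ε)
    (hzzI : zz ∈ Icc (0:ℝ) 1) (h0 : |zz - p| < P.ε) (h1 : |P.f zz - τ| < P.ε)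
    (hτ : |τ - P.R 1| ≤ P.ε) :
    (P.z 1 < zz ∧ zz < P.z 1 + 2*P.ε ∧ zz < P.z 2) ∨ zz = P.z 1 := by
  have ha := abs_lt.mp h0
  have hg12 := P.gap12
  rcases lt_trichotomy (P.z 1) zz with hlt | heq | hgt
  · left
    refine ⟨hlt, by linarith [ha.2], by linarith [ha.2]⟩
  · right; exact heq.symm
  · exfalso
    have hzl : P.z 1 - 2*P.ε < zz := by linarith [ha.1, P.hε]
    have hcol := P.hcolL 1 le_rfl P.hn zz hzl hgt
    have hd1 := P.d1
    have htri : |P.L 1 - P.R 1| ≤ |P.f zz - P.L 1| + |P.f zz - τ| + |τ - P.R 1| := by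
      have t1 : |P.L 1 - P.R 1| ≤ |P.L 1 - τ| + |τ - P.R 1| := abs_sub_le _ _ _
      have t2 : |P.L 1 - τ| ≤ |P.L 1 - P.f zz| + |P.f zz - τ| := abs_sub_le _ _ _
      rw [abs_sub_comm (P.L 1) (P.f zz)] at t2
      linarith
    have := P.hε
    linarith

lemma PC.c_mem : P.z 1 ∈ Icc (0:ℝ) 1 := P.z_mem_Icc (by have := P.hn; omega)

/-- the final contradiction : build an entry at the discontinuity `z 1`. -/
lemma pc_contra (P : PC) : False := by
  have hδ2 : 0 < P.δ / 2 := by linarith [P.hδ0]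
  have hε := P.hε
  have hδε := P.hδε
  obtain ⟨p, hp1, hp2, hpf⟩ := point_near_left (P.hL 1 le_rfl P.hn) hδ2 hε
  obtain ⟨p', hp1', hp2', hpf'⟩ := point_near_right (P.hR 1 le_rfl P.hn) hδ2 hε
  have hpI : p ∈ Icc (0:ℝ) 1 := by
    constructor
    · have := P.gap01; linarith
    · have := P.c_mem.2; linarith
  have hpI' : p' ∈ Icc (0:ℝ) 1 := by
    constructor
    · have := P.c_mem.1; linarith
    · have h1 := P.gap12
      have h2 := (P.z_mem_Icc (show 2 ≤ P.n + 1 by have := P.hn; omega)).2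
      linarith
  have hLm := P.L_mem le_rfl P.hn
  have hRm := P.R_mem le_rfl P.hn
  -- single-point prefixes
  have hone : (1:ℕ) ≤ 1 := le_rfl
  -- helper : endgame at c from the left, with an interval `I ⊆ (L-side)` such that every
  -- admissible shadow value is excluded.
  rcases P.pm0 with hm0 | hm0
  · -- left piece increasing : shadow values are `< L 1` or `= v`
    by_cases hL1 : P.L 1 < 1
    · -- W above L 1
      have hiv : P.L 1 < min 1 (P.L 1 + P.δ/2) := lt_min hL1 (by linarith)
      obtain ⟨a, b, haL, hab, hbu, hvav⟩ := avoid_point (v := P.f (P.z 1)) hiv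
      refine P.endgame 1 le_rfl (fun _ => p) (fun i _ => hpI) (fun i h => by omega) a b hab
        ?_ ?_ ?_
      · intro x hx
        constructor
        · linarith [hLm.1, hx.1, haL]
        · have : b ≤ min 1 (P.L 1 + P.δ/2) := hbu
          have := min_le_left (1:ℝ) (P.L 1 + P.δ/2)
          linarith [hx.2]
      · intro w hw
        have hw1 : P.L 1 ≤ a := haL
        have hw2 : b ≤ P.L 1 + P.δ/2 := le_trans hbu (min_le_right _ _)
        have habs := abs_lt.mp hpf
        rw [abs_lt]
        constructor <;> [linarith [hw.2]; linarith [hw.1]]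
      · intro w hw zz hzzI htrack heq
        have h0 := htrack 0
        rw [P.extO_lt (by omega)] at h0
        simp only [Function.iterate_zero_apply] at h0
        have h1 := htrack 1
        rw [P.extO_s] at h1
        simp only [Function.iterate_one] at h1
        have hτ : |w - P.L 1| ≤ P.ε := by
          have hw2 : b ≤ P.L 1 + P.δ/2 := le_trans hbu (min_le_right _ _)
          rw [abs_le]
          constructor <;> [linarith [hw.1, haL]; linarith [hw.2]]
        rcases P.left_side hp1 hp2 hzzI h0 h1 hτ with ⟨hc1, hc2, hc3⟩ | hceq
        · have hzm : zz ∈ Ioo 0 (P.z 1) := ⟨hc3, hc2⟩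
          have := strict_below_right hm0 (P.hL 1 le_rfl P.hn) hzm
          simp only [Function.iterate_one] at heq
          rw [heq] at this
          linarith [hw.1, haL]
        · simp only [Function.iterate_one] at heq
          rw [hceq] at heq
          rw [heq] at hvav
          exact hvav hw
    · -- L 1 = 1
      have hL1e : P.L 1 = 1 := le_antisymm hLm.2 (not_lt.mp hL1)
      by_cases hv1 : P.f (P.z 1) = 1
      · -- blocked by v = 1 : go to the right side
        rcases P.pm1 with hm1 | hm1
        · -- right piece increasing : shadow values `> R 1` or `= v = 1`
          have hR0 : 0 < P.R 1 ∨ P.R 1 = 0 := by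
            rcases lt_or_eq_of_le hRm.1 with h | h
            · exact Or.inl h
            · exact Or.inr h.symm
          rcases hR0 with hR0 | hR0
          · -- W below R 1, avoiding v
            obtain ⟨a, b, haL, hab, hbu, hvav⟩ := avoid_point (v := P.f (P.z 1))
              (show max 0 (P.R 1 - P.δ/2) < P.R 1 by
                rcases le_or_gt 0 (P.R 1 - P.δ/2) with h | h
                · rw [max_eq_right h]; linarith
                · rw [max_eq_left h.le]; linarith)
            refine P.endgame 1 le_rfl (fun _ => p') (fun i _ => hpI') (fun i h => by omega) a b hab
              ?_ ?_ ?_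
            · intro x hx
              constructor
              · linarith [le_max_left (0:ℝ) (P.R 1 - P.δ/2), haL, hx.1]
              · linarith [hRm.2, hbu, hx.2]
            · intro w hw
              have hw1 : max 0 (P.R 1 - P.δ/2) ≤ a := haL
              have hw2 : b ≤ P.R 1 := hbu
              have habs := abs_lt.mp hpf'
              have hmax := le_max_right (0:ℝ) (P.R 1 - P.δ/2)
              rw [abs_lt]
              constructor <;> [linarith [hw.2]; linarith [hw.1]]
            · intro w hw zz hzzI htrack heq
              have h0 := htrack 0
              rw [P.extO_lt (by omega)] at h0
              simp only [Function.iterate_zero_apply] at h0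
              have h1 := htrack 1
              rw [P.extO_s] at h1
              simp only [Function.iterate_one] at h1
              have hτ : |w - P.R 1| ≤ P.ε := by
                have hmax := le_max_right (0:ℝ) (P.R 1 - P.δ/2)
                rw [abs_le]
                constructor <;> [linarith [hw.1, haL]; linarith [hw.2, hbu]]
              rcases P.right_side hp1' hp2' hzzI h0 h1 hτ with ⟨hc1, hc2, hc3⟩ | hceq
              · have hzm : zz ∈ Ioo (P.z 1) (P.z 2) := ⟨hc1, hc3⟩
                have := strict_above_left hm1 (P.hR 1 le_rfl P.hn) hzm
                simp only [Function.iterate_one] at heq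
                rw [heq] at this
                linarith [hw.2, hbu]
              · simp only [Function.iterate_one] at heq
                rw [hceq] at heq
                rw [heq] at hvav
                exact hvav hw
          · -- R 1 = 0 and v = 1 ≠ 0 : EntryFact0 via right entry
            refine P.master0 (s := 2) (xs := fun i => if i = 0 then p' else 0) ⟨by omega, ?_, ?_, ?_, ?_⟩
            · intro i hi
              beta_reduce
              by_cases h2 : i = 0
              · rw [if_pos h2]; exact hpI'
              · rw [if_neg h2]; exact ⟨le_rfl, zero_le_one⟩
            · intro i hi
              beta_reduce
              have h2 : i = 0 := by omega
              subst h2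
              rw [if_pos rfl, if_neg (by omega)]
              have habs := abs_lt.mp hpf'
              rw [hR0] at habs
              rw [abs_lt]
              constructor <;> [linarith [habs.1]; linarith [habs.2]]
            · beta_reduce
              rw [if_neg (by omega : ¬ (2:ℕ) - 1 = 0)]
            · intro X hXI hXV hagree zz hzzI htrack
              have h0 := htrack 0
              rw [hagree 0 (by omega)] at h0; beta_reduce at h0; rw [if_pos rfl] at h0
              simp only [Function.iterate_zero_apply] at h0
              have h1 := htrack 1
              rw [hagree 1 (by omega)] at h1; beta_reduce at h1; rw [if_neg (by omega : ¬ (1:ℕ) = 0)] at h1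
              simp only [Function.iterate_one] at h1
              have hτ : |(0:ℝ) - P.R 1| ≤ P.ε := by
                rw [hR0]
                simpa using P.hε.le
              rcases P.right_side hp1' hp2' hzzI h0 h1 hτ with ⟨hc1, hc2, hc3⟩ | hceq
              · have hzm : zz ∈ Ioo (P.z 1) (P.z 2) := ⟨hc1, hc3⟩
                have hgt := strict_above_left hm1 (P.hR 1 le_rfl P.hn) hzm
                rw [hR0] at hgt
                have habs := abs_lt.mp h1
                rw [show (2:ℕ) - 1 = 1 by omega]
                simp only [Function.iterate_one]
                exact ⟨hgt, by linarith [habs.2]⟩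
              · exfalso
                rw [hceq, hv1] at h1
                have habs := abs_lt.mp h1
                have := P.eps_lt_one
                linarith [habs.2]
        · -- right piece decreasing : shadow values `< R 1` or `= v = 1`
          -- R 1 = 1 would give L 1 = R 1; so R 1 < 1
          have hR1 : P.R 1 < 1 := by
            rcases lt_or_eq_of_le hRm.2 with h | h
            · exact h
            · exfalso
              exact (P.hLR 1 le_rfl P.hn) (by rw [hL1e, h])
          obtain ⟨a, b, haL, hab, hbu, hvav⟩ := avoid_point (v := P.f (P.z 1))
            (show P.R 1 < min 1 (P.R 1 + P.δ/2) from lt_min hR1 (by linarith))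
          refine P.endgame 1 le_rfl (fun _ => p') (fun i _ => hpI') (fun i h => by omega) a b hab
            ?_ ?_ ?_
          · intro x hx
            constructor
            · linarith [hRm.1, haL, hx.1]
            · linarith [min_le_left (1:ℝ) (P.R 1 + P.δ/2), hbu, hx.2]
          · intro w hw
            have hw2 : b ≤ P.R 1 + P.δ/2 := le_trans hbu (min_le_right _ _)
            have habs := abs_lt.mp hpf'
            rw [abs_lt]
            constructor <;> [linarith [hw.2]; linarith [hw.1, haL]]
          · intro w hw zz hzzI htrack heq
            have h0 := htrack 0
            rw [P.extO_lt (by omega)] at h0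
            simp only [Function.iterate_zero_apply] at h0
            have h1 := htrack 1
            rw [P.extO_s] at h1
            simp only [Function.iterate_one] at h1
            have hτ : |w - P.R 1| ≤ P.ε := by
              have hw2 : b ≤ P.R 1 + P.δ/2 := le_trans hbu (min_le_right _ _)
              rw [abs_le]
              constructor <;> [linarith [hw.1, haL]; linarith [hw.2]]
            rcases P.right_side hp1' hp2' hzzI h0 h1 hτ with ⟨hc1, hc2, hc3⟩ | hceq
            · have hzm : zz ∈ Ioo (P.z 1) (P.z 2) := ⟨hc1, hc3⟩
              have := strict_below_left hm1 (P.hR 1 le_rfl P.hn) hzm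
              simp only [Function.iterate_one] at heq
              rw [heq] at this
              linarith [hw.1, haL]
            · simp only [Function.iterate_one] at heq
              rw [hceq] at heq
              rw [heq] at hvav
              exact hvav hw
      · -- v ≠ 1 : EntryFact1 via left entry
        refine P.master1 (s := 2) (xs := fun i => if i = 0 then p else 1) ⟨by omega, ?_, ?_, ?_, ?_⟩
        · intro i hi
          beta_reduce
          by_cases h2 : i = 0
          · rw [if_pos h2]; exact hpI
          · rw [if_neg h2]; exact ⟨zero_le_one, le_rfl⟩
        · intro i hi
          beta_reduce
          have h2 : i = 0 := by omega
          subst h2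
          rw [if_pos rfl, if_neg (by omega)]
          have habs := abs_lt.mp hpf
          rw [hL1e] at habs
          rw [abs_lt]
          constructor <;> [linarith [habs.1]; linarith [habs.2]]
        · beta_reduce
          rw [if_neg (by omega : ¬ (2:ℕ) - 1 = 0)]
        · intro X hXI hXV hagree zz hzzI htrack
          have h0 := htrack 0
          rw [hagree 0 (by omega)] at h0; beta_reduce at h0; rw [if_pos rfl] at h0
          simp only [Function.iterate_zero_apply] at h0
          have h1 := htrack 1
          rw [hagree 1 (by omega)] at h1; beta_reduce at h1; rw [if_neg (by omega : ¬ (1:ℕ) = 0)] at h1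
          simp only [Function.iterate_one] at h1
          have hτ : |(1:ℝ) - P.L 1| ≤ P.ε := by
            rw [hL1e]
            simpa using P.hε.le
          rcases P.left_side hp1 hp2 hzzI h0 h1 hτ with ⟨hc1, hc2, hc3⟩ | hceq
          · have hzm : zz ∈ Ioo 0 (P.z 1) := ⟨hc3, hc2⟩
            have hlt := strict_below_right hm0 (P.hL 1 le_rfl P.hn) hzm
            rw [hL1e] at hlt
            have habs := abs_lt.mp h1
            rw [show (2:ℕ) - 1 = 1 by omega]
            simp only [Function.iterate_one]
            exact ⟨by linarith [habs.1], hlt⟩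
          · have habs := abs_lt.mp h1
            rw [hceq] at habs ⊢
            rw [show (2:ℕ) - 1 = 1 by omega]
            simp only [Function.iterate_one]
            constructor
            · linarith [habs.1]
            · rcases lt_or_eq_of_le (P.hf P.c_mem).2 with h | h
              · exact h
              · exact absurd h hv1
  · -- left piece decreasing : shadow values are `> L 1` or `= v`
    by_cases hL0 : 0 < P.L 1
    · -- W below L 1
      obtain ⟨a, b, haL, hab, hbu, hvav⟩ := avoid_point (v := P.f (P.z 1))
        (show max 0 (P.L 1 - P.δ/2) < P.L 1 by
          rcases le_or_gt 0 (P.L 1 - P.δ/2) with h | h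
          · rw [max_eq_right h]; linarith
          · rw [max_eq_left h.le]; linarith)
      refine P.endgame 1 le_rfl (fun _ => p) (fun i _ => hpI) (fun i h => by omega) a b hab
        ?_ ?_ ?_
      · intro x hx
        constructor
        · linarith [le_max_left (0:ℝ) (P.L 1 - P.δ/2), haL, hx.1]
        · linarith [hLm.2, hbu, hx.2]
      · intro w hw
        have habs := abs_lt.mp hpf
        have hmax := le_max_right (0:ℝ) (P.L 1 - P.δ/2)
        rw [abs_lt]
        constructor <;> [linarith [hw.2, hbu]; linarith [hw.1, haL]]
      · intro w hw zz hzzI htrack heq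
        have h0 := htrack 0
        rw [P.extO_lt (by omega)] at h0
        simp only [Function.iterate_zero_apply] at h0
        have h1 := htrack 1
        rw [P.extO_s] at h1
        simp only [Function.iterate_one] at h1
        have hτ : |w - P.L 1| ≤ P.ε := by
          have hmax := le_max_right (0:ℝ) (P.L 1 - P.δ/2)
          rw [abs_le]
          constructor <;> [linarith [hw.1, haL]; linarith [hw.2, hbu]]
        rcases P.left_side hp1 hp2 hzzI h0 h1 hτ with ⟨hc1, hc2, hc3⟩ | hceq
        · have hzm : zz ∈ Ioo 0 (P.z 1) := ⟨hc3, hc2⟩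
          have := strict_above_right hm0 (P.hL 1 le_rfl P.hn) hzm
          simp only [Function.iterate_one] at heq
          rw [heq] at this
          linarith [hw.2, hbu]
        · simp only [Function.iterate_one] at heq
          rw [hceq] at heq
          rw [heq] at hvav
          exact hvav hw
    · -- L 1 = 0
      have hL0e : P.L 1 = 0 := le_antisymm (not_lt.mp hL0) hLm.1
      by_cases hv0 : P.f (P.z 1) = 0
      · -- blocked by v = 0 : right side.  L 1 = 0 so R 1 ≠ 0, hence 0 < R 1.
        have hR0 : 0 < P.R 1 := by
          rcases lt_or_eq_of_le hRm.1 with h | h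
          · exact h
          · exact absurd (by rw [hL0e, ← h]) (P.hLR 1 le_rfl P.hn)
        rcases P.pm1 with hm1 | hm1
        · -- right increasing : values > R 1 ; W below R 1
          obtain ⟨a, b, haL, hab, hbu, hvav⟩ := avoid_point (v := P.f (P.z 1))
            (show max 0 (P.R 1 - P.δ/2) < P.R 1 by
              rcases le_or_gt 0 (P.R 1 - P.δ/2) with h | h
              · rw [max_eq_right h]; linarith
              · rw [max_eq_left h.le]; linarith)
          refine P.endgame 1 le_rfl (fun _ => p') (fun i _ => hpI') (fun i h => by omega) a b hab
            ?_ ?_ ?_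
          · intro x hx
            constructor
            · linarith [le_max_left (0:ℝ) (P.R 1 - P.δ/2), haL, hx.1]
            · linarith [hRm.2, hbu, hx.2]
          · intro w hw
            have habs := abs_lt.mp hpf'
            have hmax := le_max_right (0:ℝ) (P.R 1 - P.δ/2)
            rw [abs_lt]
            constructor <;> [linarith [hw.2, hbu]; linarith [hw.1, haL]]
          · intro w hw zz hzzI htrack heq
            have h0 := htrack 0
            rw [P.extO_lt (by omega)] at h0
            simp only [Function.iterate_zero_apply] at h0
            have h1 := htrack 1
            rw [P.extO_s] at h1
            simp only [Function.iterate_one] at h1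
            have hτ : |w - P.R 1| ≤ P.ε := by
              have hmax := le_max_right (0:ℝ) (P.R 1 - P.δ/2)
              rw [abs_le]
              constructor <;> [linarith [hw.1, haL]; linarith [hw.2, hbu]]
            rcases P.right_side hp1' hp2' hzzI h0 h1 hτ with ⟨hc1, hc2, hc3⟩ | hceq
            · have hzm : zz ∈ Ioo (P.z 1) (P.z 2) := ⟨hc1, hc3⟩
              have := strict_above_left hm1 (P.hR 1 le_rfl P.hn) hzm
              simp only [Function.iterate_one] at heq
              rw [heq] at this
              linarith [hw.2, hbu]
            · simp only [Function.iterate_one] at heq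
              rw [hceq] at heq
              rw [heq] at hvav
              exact hvav hw
        · -- right decreasing : values < R 1
          by_cases hR1 : P.R 1 < 1
          · obtain ⟨a, b, haL, hab, hbu, hvav⟩ := avoid_point (v := P.f (P.z 1))
              (show P.R 1 < min 1 (P.R 1 + P.δ/2) from lt_min hR1 (by linarith))
            refine P.endgame 1 le_rfl (fun _ => p') (fun i _ => hpI') (fun i h => by omega) a b hab
              ?_ ?_ ?_
            · intro x hx
              constructor
              · linarith [hRm.1, haL, hx.1]
              · linarith [min_le_left (1:ℝ) (P.R 1 + P.δ/2), hbu, hx.2]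
            · intro w hw
              have hw2 : b ≤ P.R 1 + P.δ/2 := le_trans hbu (min_le_right _ _)
              have habs := abs_lt.mp hpf'
              rw [abs_lt]
              constructor <;> [linarith [hw.2]; linarith [hw.1, haL]]
            · intro w hw zz hzzI htrack heq
              have h0 := htrack 0
              rw [P.extO_lt (by omega)] at h0
              simp only [Function.iterate_zero_apply] at h0
              have h1 := htrack 1
              rw [P.extO_s] at h1
              simp only [Function.iterate_one] at h1
              have hτ : |w - P.R 1| ≤ P.ε := by
                have hw2 : b ≤ P.R 1 + P.δ/2 := le_trans hbu (min_le_right _ _)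
                rw [abs_le]
                constructor <;> [linarith [hw.1, haL]; linarith [hw.2]]
              rcases P.right_side hp1' hp2' hzzI h0 h1 hτ with ⟨hc1, hc2, hc3⟩ | hceq
              · have hzm : zz ∈ Ioo (P.z 1) (P.z 2) := ⟨hc1, hc3⟩
                have := strict_below_left hm1 (P.hR 1 le_rfl P.hn) hzm
                simp only [Function.iterate_one] at heq
                rw [heq] at this
                linarith [hw.1, haL]
              · simp only [Function.iterate_one] at heq
                rw [hceq] at heq
                rw [heq] at hvav
                exact hvav hw
          · -- R 1 = 1 : EntryFact1 via right entry (v = 0 ≠ 1)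
            have hR1e : P.R 1 = 1 := le_antisymm hRm.2 (not_lt.mp hR1)
            refine P.master1 (s := 2) (xs := fun i => if i = 0 then p' else 1) ⟨by omega, ?_, ?_, ?_, ?_⟩
            · intro i hi
              beta_reduce
              by_cases h2 : i = 0
              · rw [if_pos h2]; exact hpI'
              · rw [if_neg h2]; exact ⟨zero_le_one, le_rfl⟩
            · intro i hi
              beta_reduce
              have h2 : i = 0 := by omega
              subst h2
              rw [if_pos rfl, if_neg (by omega)]
              have habs := abs_lt.mp hpf'
              rw [hR1e] at habs
              rw [abs_lt]
              constructor <;> [linarith [habs.1]; linarith [habs.2]]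
            · beta_reduce
              rw [if_neg (by omega : ¬ (2:ℕ) - 1 = 0)]
            · intro X hXI hXV hagree zz hzzI htrack
              have h0 := htrack 0
              rw [hagree 0 (by omega)] at h0; beta_reduce at h0; rw [if_pos rfl] at h0
              simp only [Function.iterate_zero_apply] at h0
              have h1 := htrack 1
              rw [hagree 1 (by omega)] at h1; beta_reduce at h1; rw [if_neg (by omega : ¬ (1:ℕ) = 0)] at h1
              simp only [Function.iterate_one] at h1
              have hτ : |(1:ℝ) - P.R 1| ≤ P.ε := by
                rw [hR1e]
                simpa using P.hε.le
              rcases P.right_side hp1' hp2' hzzI h0 h1 hτ with ⟨hc1, hc2, hc3⟩ | hceq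
              · have hzm : zz ∈ Ioo (P.z 1) (P.z 2) := ⟨hc1, hc3⟩
                have hlt := strict_below_left hm1 (P.hR 1 le_rfl P.hn) hzm
                rw [hR1e] at hlt
                have habs := abs_lt.mp h1
                rw [show (2:ℕ) - 1 = 1 by omega]
                simp only [Function.iterate_one]
                exact ⟨by linarith [habs.1], hlt⟩
              · exfalso
                rw [hceq, hv0] at h1
                have habs := abs_lt.mp h1
                have := P.eps_lt_one
                linarith [habs.1]
      · -- v ≠ 0 : EntryFact0 via left entry
        refine P.master0 (s := 2) (xs := fun i => if i = 0 then p else 0) ⟨by omega, ?_, ?_, ?_, ?_⟩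
        · intro i hi
          beta_reduce
          by_cases h2 : i = 0
          · rw [if_pos h2]; exact hpI
          · rw [if_neg h2]; exact ⟨le_rfl, zero_le_one⟩
        · intro i hi
          beta_reduce
          have h2 : i = 0 := by omega
          subst h2
          rw [if_pos rfl, if_neg (by omega)]
          have habs := abs_lt.mp hpf
          rw [hL0e] at habs
          rw [abs_lt]
          constructor <;> [linarith [habs.1]; linarith [habs.2]]
        · beta_reduce
          rw [if_neg (by omega : ¬ (2:ℕ) - 1 = 0)]
        · intro X hXI hXV hagree zz hzzI htrack
          have h0 := htrack 0
          rw [hagree 0 (by omega)] at h0; beta_reduce at h0; rw [if_pos rfl] at h0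
          simp only [Function.iterate_zero_apply] at h0
          have h1 := htrack 1
          rw [hagree 1 (by omega)] at h1; beta_reduce at h1; rw [if_neg (by omega : ¬ (1:ℕ) = 0)] at h1
          simp only [Function.iterate_one] at h1
          have hτ : |(0:ℝ) - P.L 1| ≤ P.ε := by
            rw [hL0e]
            simpa using P.hε.le
          rcases P.left_side hp1 hp2 hzzI h0 h1 hτ with ⟨hc1, hc2, hc3⟩ | hceq
          · have hzm : zz ∈ Ioo 0 (P.z 1) := ⟨hc3, hc2⟩
            have hgt := strict_above_right hm0 (P.hL 1 le_rfl P.hn) hzm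
            rw [hL0e] at hgt
            have habs := abs_lt.mp h1
            rw [show (2:ℕ) - 1 = 1 by omega]
            simp only [Function.iterate_one]
            exact ⟨hgt, by linarith [habs.2]⟩
          · have habs := abs_lt.mp h1
            rw [hceq] at habs ⊢
            rw [show (2:ℕ) - 1 = 1 by omega]
            simp only [Function.iterate_one]
            constructor
            · rcases lt_or_eq_of_le (P.hf P.c_mem).1 with h | h
              · exact h
              · exact absurd h.symm hv0
            · linarith [habs.2]


/-! ### Existence of one-sided limits on monotone pieces -/

lemma exists_left_lim {g : ℝ → ℝ} {a b : ℝ} (hab : a < b)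
    (hm : StrictMonoOn g (Ioo a b) ∨ StrictAntiOn g (Ioo a b))
    (hbd : ∀ x ∈ Ioo a b, g x ∈ Icc (0:ℝ) 1) :
    ∃ M, Tendsto g (𝓝[<] b) (𝓝 M) := by
  have hne : (Ioo a b).Nonempty := nonempty_Ioo.mpr hab
  rcases hm with hm | hm
  · refine ⟨_, MonotoneOn.tendsto_nhdsWithin_Ioo_left hne hm.monotoneOn ?_⟩
    refine ⟨1, ?_⟩
    rintro y ⟨x, hx, rfl⟩
    exact (hbd x hx).2
  · refine ⟨_, AntitoneOn.tendsto_nhdsWithin_Ioo_left hne hm.antitoneOn ?_⟩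
    refine ⟨0, ?_⟩
    rintro y ⟨x, hx, rfl⟩
    exact (hbd x hx).1

lemma exists_right_lim {g : ℝ → ℝ} {a b : ℝ} (hab : a < b)
    (hm : StrictMonoOn g (Ioo a b) ∨ StrictAntiOn g (Ioo a b))
    (hbd : ∀ x ∈ Ioo a b, g x ∈ Icc (0:ℝ) 1) :
    ∃ M, Tendsto g (𝓝[>] a) (𝓝 M) := by
  have hne : (Ioo a b).Nonempty := nonempty_Ioo.mpr hab
  rcases hm with hm | hm
  · refine ⟨_, MonotoneOn.tendsto_nhdsWithin_Ioo_right hne hm.monotoneOn ?_⟩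
    refine ⟨0, ?_⟩
    rintro y ⟨x, hx, rfl⟩
    exact (hbd x hx).1
  · refine ⟨_, AntitoneOn.tendsto_nhdsWithin_Ioo_right hne hm.antitoneOn ?_⟩
    refine ⟨1, ?_⟩
    rintro y ⟨x, hx, rfl⟩
    exact (hbd x hx).2

end NoShadow

/-! ### Main theorem -/

theorem transitive_pcm_no_shadowing
    (f : ℝ → ℝ) (hf : Set.MapsTo f (Icc 0 1) (Icc 0 1))
    (hpcm : IsPCMMap f) (htrans : IntervalTransitive f) :
    ¬ ShadowingOn f (Icc 0 1) := by
  intro hsh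
  obtain ⟨n, z, hn, hz0, hzn, hzlt, hcm, hjump⟩ := hpcm
  classical
  choose! L R hLT hRT hLRne using hjump
  -- one-sided limits at the endpoints
  have hzn1 : z n < z (n+1) := hzlt n (n+1) (by omega) le_rfl
  have hz01 : z 0 < z 1 := hzlt 0 1 (by omega) (by omega)
  have hz0le : (0:ℝ) ≤ z n := by
    rcases Nat.eq_zero_or_pos n with h | h
    · rw [h, hz0]
    · exact le_of_lt (by have := hzlt 0 n h (by omega); rwa [hz0] at this)
  have hz1le : z 1 ≤ 1 := by
    have := hzlt 1 (n+1) (by omega) le_rfl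
    rw [hzn] at this
    exact this.le
  have hbdN : ∀ x ∈ Ioo (z n) (z (n+1)), f x ∈ Icc (0:ℝ) 1 := by
    intro x hx
    refine hf ⟨le_trans hz0le hx.1.le, ?_⟩
    have := hx.2
    rw [hzn] at this
    exact this.le
  have hbd0 : ∀ x ∈ Ioo (z 0) (z 1), f x ∈ Icc (0:ℝ) 1 := by
    intro x hx
    refine hf ⟨?_, le_trans hx.2.le hz1le⟩
    have := hx.1
    rw [hz0] at this
    exact this.le
  obtain ⟨M1, hM1t'⟩ := NoShadow.exists_left_lim hzn1 (hcm n le_rfl).2 hbdN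
  rw [hzn] at hM1t'
  obtain ⟨M0, hM0t'⟩ := NoShadow.exists_right_lim hz01 (hcm 0 (Nat.zero_le _)).2 hbd0
  rw [hz0] at hM0t'
  -- collar widths at interior discontinuities
  have hdpos : ∀ j, 1 ≤ j → j ≤ n → 0 < |L j - R j| :=
    fun j h1 h2 => abs_pos.mpr (sub_ne_zero.mpr (hLRne j h1 h2))
  have hγLe : ∀ j, ∃ γ, 0 < γ ∧ (1 ≤ j → j ≤ n → ∀ y, z j - γ < y → y < z j →
      |f y - L j| < |L j - R j|/8) := by
    intro j
    by_cases hj : 1 ≤ j ∧ j ≤ n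
    · have hacc : 0 < |L j - R j|/8 := by linarith [hdpos j hj.1 hj.2]
      obtain ⟨γ, hγ, hspec⟩ := NoShadow.collar_left (hLT j hj.1 hj.2) hacc
      exact ⟨γ, hγ, fun _ _ y h1 h2 => hspec y h1 h2⟩
    · exact ⟨1, one_pos, fun h1 h2 => absurd ⟨h1, h2⟩ hj⟩
  have hγRe : ∀ j, ∃ γ, 0 < γ ∧ (1 ≤ j → j ≤ n → ∀ y, z j < y → y < z j + γ →
      |f y - R j| < |L j - R j|/8) := by
    intro j
    by_cases hj : 1 ≤ j ∧ j ≤ n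
    · have hacc : 0 < |L j - R j|/8 := by linarith [hdpos j hj.1 hj.2]
      obtain ⟨γ, hγ, hspec⟩ := NoShadow.collar_right (hRT j hj.1 hj.2) hacc
      exact ⟨γ, hγ, fun _ _ y h1 h2 => hspec y h1 h2⟩
    · exact ⟨1, one_pos, fun h1 h2 => absurd ⟨h1, h2⟩ hj⟩
  choose γL hγLpos hγLspec using hγLe
  choose γR hγRpos hγRspec using hγRe
  -- endpoint collars
  have hq1e : ∃ C, 0 < C ∧ (f 1 ≠ M1 → C ≤ |f 1 - M1| ∧ ∀ y, 1 - C < y → y < 1 →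
      |f y - M1| < |f 1 - M1|/4) := by
    by_cases h : f 1 = M1
    · exact ⟨1, one_pos, fun hc => absurd h hc⟩
    · have hq : 0 < |f 1 - M1| := abs_pos.mpr (sub_ne_zero.mpr h)
      have hacc : 0 < |f 1 - M1|/4 := by linarith
      obtain ⟨γ, hγ, hspec⟩ := NoShadow.collar_left hM1t' hacc
      refine ⟨min γ |f 1 - M1|, lt_min hγ hq, fun _ => ⟨min_le_right _ _, ?_⟩⟩
      intro y h1 h2
      refine hspec y ?_ h2
      have := min_le_left γ (|f 1 - M1|)
      linarith
  have hq0e : ∃ C, 0 < C ∧ (f 0 ≠ M0 → C ≤ |f 0 - M0| ∧ ∀ y, 0 < y → y < C →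
      |f y - M0| < |f 0 - M0|/4) := by
    by_cases h : f 0 = M0
    · exact ⟨1, one_pos, fun hc => absurd h hc⟩
    · have hq : 0 < |f 0 - M0| := abs_pos.mpr (sub_ne_zero.mpr h)
      have hacc : 0 < |f 0 - M0|/4 := by linarith
      obtain ⟨γ, hγ, hspec⟩ := NoShadow.collar_right hM0t' hacc
      refine ⟨min γ |f 0 - M0|, lt_min hγ hq, fun _ => ⟨min_le_right _ _, ?_⟩⟩
      intro y h1 h2
      refine hspec y h1 ?_
      have := min_le_left γ (|f 0 - M0|)
      linarith
  obtain ⟨C1, hC1, hC1s⟩ := hq1e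
  obtain ⟨C0, hC0, hC0s⟩ := hq0e
  -- the finite minima
  have hne1 : (Finset.Icc 1 n).Nonempty := Finset.nonempty_Icc.mpr hn
  have hne0 : (Finset.Icc 0 n).Nonempty := Finset.nonempty_Icc.mpr (Nat.zero_le n)
  set A := (Finset.Icc 1 n).inf' hne1 (fun j => min (|L j - R j|) (min (γL j) (γR j))) with hA
  set B := (Finset.Icc 0 n).inf' hne0 (fun t => z (t+1) - z t) with hB
  set ε := min (min A B) (min C1 C0) / 100 with hε
  have hApos : 0 < A := by
    rw [hA, Finset.lt_inf'_iff]
    intro j hj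
    rw [Finset.mem_Icc] at hj
    exact lt_min (hdpos j hj.1 hj.2) (lt_min (hγLpos j) (hγRpos j))
  have hBpos : 0 < B := by
    rw [hB, Finset.lt_inf'_iff]
    intro t ht
    rw [Finset.mem_Icc] at ht
    have := hzlt t (t+1) (by omega) (by omega)
    linarith
  have hεpos : 0 < ε := by
    rw [hε]
    have := lt_min (lt_min hApos hBpos) (lt_min hC1 hC0)
    linarith
  have hεA : ∀ j, j ∈ Finset.Icc 1 n → 100 * ε ≤ min (|L j - R j|) (min (γL j) (γR j)) := by
    intro j hj
    have h1 := Finset.inf'_le (f := fun j => min (|L j - R j|) (min (γL j) (γR j))) hj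
    rw [← hA] at h1
    have h2 : min (min A B) (min C1 C0) ≤ A := le_trans (min_le_left _ _) (min_le_left _ _)
    rw [hε]
    linarith
  have hεB : ∀ t, t ∈ Finset.Icc 0 n → 100 * ε ≤ z (t+1) - z t := by
    intro t ht
    have h1 := Finset.inf'_le (f := fun t => z (t+1) - z t) ht
    rw [← hB] at h1
    have h2 : min (min A B) (min C1 C0) ≤ B := le_trans (min_le_left _ _) (min_le_right _ _)
    rw [hε]
    linarith
  have hεC1 : 100 * ε ≤ C1 := by
    have h2 : min (min A B) (min C1 C0) ≤ C1 := le_trans (min_le_right _ _) (min_le_left _ _)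
    rw [hε]; linarith
  have hεC0 : 100 * ε ≤ C0 := by
    have h2 : min (min A B) (min C1 C0) ≤ C0 := le_trans (min_le_right _ _) (min_le_right _ _)
    rw [hε]; linarith
  -- shadowing constant
  obtain ⟨δ0, hδ0pos, hδ0sh⟩ := hsh ε hεpos
  refine NoShadow.pc_contra
    { f := f, n := n, z := z, hn := hn, hz0 := hz0, hzn := hzn, hzlt := hzlt
      hcont := fun i hi => (hcm i hi).1
      hpm := fun i hi => (hcm i hi).2
      hf := hf, htr := htrans
      L := L, R := R, hL := hLT, hR := hRT, hLR := hLRne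
      M0 := M0, M1 := M1, hM0 := hM0t', hM1 := hM1t'
      ε := ε, δ := min δ0 ε
      hε := hεpos
      hδ0 := lt_min hδ0pos hεpos
      hδε := min_le_right _ _
      hd := ?_, hgap := ?_, hcolL := ?_, hcolR := ?_, hq1 := ?_, hq0 := ?_
      hsh := ?_ }
  · intro j h1 h2
    have := hεA j (Finset.mem_Icc.mpr ⟨h1, h2⟩)
    have h3 := min_le_left (|L j - R j|) (min (γL j) (γR j))
    linarith [hεpos]
  · intro t ht
    have := hεB t (Finset.mem_Icc.mpr ⟨Nat.zero_le _, ht⟩)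
    linarith [hεpos]
  · intro j h1 h2 y hy1 hy2
    have h3 := hεA j (Finset.mem_Icc.mpr ⟨h1, h2⟩)
    have h4 : min (|L j - R j|) (min (γL j) (γR j)) ≤ γL j :=
      le_trans (min_le_right _ _) (min_le_left _ _)
    refine hγLspec j h1 h2 y ?_ hy2
    have : 2 * ε ≤ γL j := by linarith [hεpos]
    linarith
  · intro j h1 h2 y hy1 hy2
    have h3 := hεA j (Finset.mem_Icc.mpr ⟨h1, h2⟩)
    have h4 : min (|L j - R j|) (min (γL j) (γR j)) ≤ γR j :=
      le_trans (min_le_right _ _) (min_le_right _ _)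
    refine hγRspec j h1 h2 y hy1 ?_
    have : 2 * ε ≤ γR j := by linarith [hεpos]
    linarith
  · intro hne
    obtain ⟨hs1, hs2⟩ := hC1s hne
    constructor
    · linarith [hεpos]
    · intro y h1 h2
      refine hs2 y ?_ h2
      have : 2 * ε ≤ C1 := by linarith [hεpos]
      linarith
  · intro hne
    obtain ⟨hs1, hs2⟩ := hC0s hne
    constructor
    · linarith [hεpos]
    · intro y h1 h2
      refine hs2 y h1 ?_
      have : 2 * ε ≤ C0 := by linarith [hεpos]
      linarith
  · intro x hxI hxV
    exact hδ0sh x hxI (fun i => lt_of_lt_of_le (hxV i) (min_le_left _ _))
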